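/- arXiv:1102.4782 — 6 statements merged into one kernel-verified Lean document; each statement's English description precedes it below -/
import Mathlib

section
/- Let P(z) be a nonzero polynomial, K ⊂ ℂ compact, a > 0, and let p, q be positive integers with p > deg P + q. Then there exist c, d ∈ ℂ \ {0} such that the rational function R(z) = P(z) + d z^p / (1 − (c z)^q) satisfies: (i) 1 − (c z)^q ≠ 0 for all z ∈ K; (ii) sup_{z∈K} |P(z) − R(z)| < a; (iii) the Taylor coefficients β_ν of R at 0 satisfy β_ν = ε_ν for all ν ≤ deg P, where P(z) = Σ ε_ν z^ν. -/
theorem lemma_2_3 (P : Polynomial ℂ) (hP : P ≠ 0) (K : Set ℂ) (hK : IsCompact K)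
    (a : ℝ) (ha : 0 < a) (p q : ℕ) (hp : 1 ≤ p) (hq : 1 ≤ q)
    (hpq : P.natDegree + q < p) :
    ∃ c d : ℂ, c ≠ 0 ∧ d ≠ 0 ∧
      (∀ z ∈ K, 1 - (c * z) ^ q ≠ 0) ∧
      (∀ z ∈ K, ‖P.eval z - (P.eval z + d * z ^ p / (1 - (c * z) ^ q))‖ < a) ∧
      ∃ ps : FormalMultilinearSeries ℂ ℂ ℂ,
        HasFPowerSeriesAt (fun z => P.eval z + d * z ^ p / (1 - (c * z) ^ q)) ps 0 ∧
        ∀ ν ≤ P.natDegree, ps.coeff ν = P.coeff ν := by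
  classical
  obtain ⟨M0, hM0⟩ := hK.isBounded.exists_norm_le
  set M : ℝ := max M0 1 with hMdef
  have hM1 : (1:ℝ) ≤ M := le_max_right _ _
  have hMpos : (0:ℝ) < M := lt_of_lt_of_le one_pos hM1
  have hMK : ∀ z ∈ K, ‖z‖ ≤ M := fun z hz => (hM0 z hz).trans (le_max_left _ _)
  have hMp : (0:ℝ) < M ^ p := pow_pos hMpos p
  set cr : ℝ := 1 / (2 * M) with hcrdef
  have hcr : 0 < cr := by positivity
  have hcrM : cr * M = 1 / 2 := by
    field_simp [hcrdef]
    rw [hcrdef]; field_simp [hMpos.ne']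
  set c : ℂ := (cr : ℂ) with hcdef
  have hc0 : c ≠ 0 := by
    simp only [hcdef, ne_eq, Complex.ofReal_eq_zero]
    exact hcr.ne'
  have hnc : ‖c‖ = cr := by simp [hcdef, abs_of_pos hcr]
  set dr : ℝ := a / (4 * M ^ p) with hdrdef
  have hdr : 0 < dr := by positivity
  set d : ℂ := (dr : ℂ) with hddef
  have hd0 : d ≠ 0 := by
    simp only [hddef, ne_eq, Complex.ofReal_eq_zero]
    exact hdr.ne'
  have hnd : ‖d‖ = dr := by simp [hddef, abs_of_pos hdr]
  -- bound on ‖c*z‖ for z ∈ K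
  have hcz : ∀ z ∈ K, ‖c * z‖ ≤ 1 / 2 := by
    intro z hz
    rw [norm_mul, hnc]
    calc cr * ‖z‖ ≤ cr * M := by
          exact mul_le_mul_of_nonneg_left (hMK z hz) hcr.le
      _ = 1 / 2 := hcrM
  have hpowhalf : ((1:ℝ)/2) ^ q ≤ 1/2 :=
    pow_le_of_le_one (by norm_num) (by norm_num) (by omega)
  have hczq : ∀ z ∈ K, ‖(c * z) ^ q‖ ≤ 1 / 2 := by
    intro z hz
    rw [norm_pow]
    calc ‖c * z‖ ^ q ≤ ((1:ℝ)/2) ^ q :=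
          pow_le_pow_left₀ (norm_nonneg _) (hcz z hz) q
      _ ≤ 1/2 := hpowhalf
  have hne : ∀ w : ℂ, ‖w‖ < 1 → (1:ℂ) - w ≠ 0 := by
    intro w hw h0
    rw [sub_eq_zero] at h0
    rw [← h0] at hw
    simp at hw
  have hKne : ∀ z ∈ K, 1 - (c * z) ^ q ≠ 0 := by
    intro z hz
    exact hne _ (lt_of_le_of_lt (hczq z hz) (by norm_num))
  refine ⟨c, d, hc0, hd0, hKne, ?_, ?_⟩
  · -- the sup bound
    intro z hz
    have hden : (1:ℝ)/2 ≤ ‖1 - (c * z) ^ q‖ := by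
      have h1 := norm_sub_norm_le (1:ℂ) ((c * z) ^ q)
      have h2 := hczq z hz
      simp only [norm_one] at h1
      linarith
    have heq : ‖P.eval z - (P.eval z + d * z ^ p / (1 - (c * z) ^ q))‖
        = ‖d * z ^ p / (1 - (c * z) ^ q)‖ := by
      rw [sub_add_cancel_left, norm_neg]
    rw [heq, norm_div, norm_mul, norm_pow, hnd]
    have hnum : dr * ‖z‖ ^ p ≤ dr * M ^ p :=
      mul_le_mul_of_nonneg_left (pow_le_pow_left₀ (norm_nonneg _) (hMK z hz) p) hdr.le
    have hb : dr * ‖z‖ ^ p / ‖1 - (c * z) ^ q‖ ≤ dr * M ^ p / (1/2) :=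
      div_le_div₀ (by positivity) hnum (by norm_num) hden
    have hval : dr * M ^ p / (1/2) = a / 2 := by
      rw [hdrdef]
      field_simp
      ring
    rw [hval] at hb
    linarith
  · -- the power series
    set g : ℕ → ℕ := fun k => p + q * k with hgdef
    have hg : Function.Injective g := by
      intro k l h
      simp only [hgdef, add_right_inj] at h
      exact Nat.eq_of_mul_eq_mul_left (by omega) h
    set e : ℕ → ℂ := Function.extend g (fun k => d * c ^ (q * k)) 0 with hedef
    have he_apply : ∀ k, e (g k) = d * c ^ (q * k) := fun k => hg.extend_apply _ _ k
    have he_zero : ∀ n, n ∉ Set.range g → e n = 0 := by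
      intro n hn
      rw [hedef, Function.extend_apply' _ _ _ (by simpa [Set.range] using hn)]
      rfl
    set b : ℕ → ℂ := fun n => P.coeff n + e n with hbdef
    set ps := FormalMultilinearSeries.ofScalars ℂ b with hpsdef
    have hps_apply : ∀ (y : ℂ) (n : ℕ), (ps n fun _ => y) = b n • y ^ n := by
      intro y n
      exact FormalMultilinearSeries.ofScalars_apply_eq b y n
    -- HasSum on the ball of radius M
    have htot : ∀ y : ℂ, ‖y‖ < M →
        HasSum (fun n => b n • y ^ n) (P.eval y + d * y ^ p / (1 - (c * y) ^ q)) := by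
      intro y hy
      have hcy : ‖c * y‖ < 1/2 := by
        rw [norm_mul, hnc]
        calc cr * ‖y‖ < cr * M := by
              exact mul_lt_mul_of_pos_left hy hcr
          _ = 1/2 := hcrM
      have hcyq : ‖(c * y) ^ q‖ < 1 := by
        rw [norm_pow]
        exact pow_lt_one₀ (norm_nonneg _) (lt_trans hcy (by norm_num)) (by omega)
      -- polynomial part
      have hSP : HasSum (fun n => P.coeff n • y ^ n) (P.eval y) := by
        have hz : ∀ n ∉ Finset.range (P.natDegree + 1), P.coeff n • y ^ n = 0 := by
          intro n hn
          rw [Polynomial.coeff_eq_zero_of_natDegree_lt (by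
            simpa using Nat.lt_of_succ_le (not_lt.mp (by simpa using hn)))]
          simp
        have := hasSum_sum_of_ne_finset_zero (L := SummationFilter.unconditional ℕ) hz
        rwa [show ∑ n ∈ Finset.range (P.natDegree + 1), P.coeff n • y ^ n = P.eval y by
          rw [Polynomial.eval_eq_sum_range]
          simp [smul_eq_mul]] at this
      -- geometric part
      have hSE : HasSum (fun n => e n • y ^ n) (d * y ^ p / (1 - (c * y) ^ q)) := by
        have hzero : ∀ n ∉ Set.range g, e n • y ^ n = 0 := by
          intro n hn
          rw [he_zero n hn, zero_smul]
        refine (Function.Injective.hasSum_iff hg hzero).mp ?_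
        have hkey : ∀ k, ((fun n => e n • y ^ n) ∘ g) k
            = (d * y ^ p) * ((c * y) ^ q) ^ k := by
          intro k
          simp only [Function.comp_apply]
          rw [he_apply]
          simp only [hgdef, smul_eq_mul]
          rw [pow_add]
          ring
        rw [funext hkey]
        have hgeo := (hasSum_geometric_of_norm_lt_one hcyq).mul_left (d * y ^ p)
        rwa [← div_eq_mul_inv] at hgeo
      simpa [hbdef, add_smul, add_mul, smul_eq_mul] using hSP.add hSE
    -- radius bound
    set R : NNReal := ⟨M, hMpos.le⟩ with hRdef
    have hrad : (R : ENNReal) ≤ ps.radius := by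
      apply FormalMultilinearSeries.le_radius_of_summable_norm
      have hcoe : (R : ℝ) = M := rfl
      have hnb : ∀ n, ‖ps n‖ * (R:ℝ) ^ n = ‖b n‖ * M ^ n := by
        intro n
        rw [hcoe, hpsdef, FormalMultilinearSeries.ofScalars_norm]
      rw [funext hnb]
      have s1 : Summable (fun n => ‖P.coeff n‖ * M ^ n) := by
        apply summable_of_ne_finset_zero (s := Finset.range (P.natDegree + 1))
        intro n hn
        rw [Polynomial.coeff_eq_zero_of_natDegree_lt (by
          simpa using Nat.lt_of_succ_le (not_lt.mp (by simpa using hn)))]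
        simp
      have s2 : Summable (fun n => ‖e n‖ * M ^ n) := by
        have hzero : ∀ n ∉ Set.range g, ‖e n‖ * M ^ n = 0 := by
          intro n hn
          rw [he_zero n hn]
          simp
        refine (Function.Injective.summable_iff hg hzero).mp ?_
        have hkey : ∀ k, ((fun n => ‖e n‖ * M ^ n) ∘ g) k
            = (dr * M ^ p) * (((1:ℝ)/2) ^ q) ^ k := by
          intro k
          simp only [Function.comp_apply]
          rw [he_apply]
          simp only [hgdef]
          rw [norm_mul, norm_pow, hnc, hnd, pow_add]
          have : cr ^ (q * k) * M ^ (q * k) = (((1:ℝ)/2) ^ q) ^ k := by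
            rw [← mul_pow, hcrM, ← pow_mul]
          calc dr * cr ^ (q * k) * (M ^ p * M ^ (q * k))
              = (dr * M ^ p) * (cr ^ (q * k) * M ^ (q * k)) := by ring
            _ = (dr * M ^ p) * (((1:ℝ)/2) ^ q) ^ k := by rw [this]
        rw [funext hkey]
        exact (summable_geometric_of_lt_one (by positivity)
          (lt_of_le_of_lt hpowhalf (by norm_num))).mul_left _
      apply Summable.of_nonneg_of_le (fun n => by positivity)
        (fun n => ?_) (s1.add s2)
      calc ‖b n‖ * M ^ n ≤ (‖P.coeff n‖ + ‖e n‖) * M ^ n := by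
            exact mul_le_mul_of_nonneg_right (norm_add_le _ _) (by positivity)
        _ = ‖P.coeff n‖ * M ^ n + ‖e n‖ * M ^ n := by ring
    have hball : HasFPowerSeriesOnBall
        (fun z => P.eval z + d * z ^ p / (1 - (c * z) ^ q)) ps 0 R := by
      refine ⟨hrad, ?_, ?_⟩
      · exact_mod_cast (show (0:NNReal) < R from hMpos)
      · intro y hy
        rw [mem_emetric_ball_zero_iff] at hy
        have hy' : ‖y‖ < M := by
          have := ENNReal.coe_lt_coe.mp hy
          exact this
        simp only [zero_add]
        have := htot y hy'
        simpa [hps_apply] using this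
    refine ⟨ps, hball.hasFPowerSeriesAt, ?_⟩
    intro ν hν
    have hνp : ν ∉ Set.range g := by
      rintro ⟨k, hk⟩
      simp only [hgdef] at hk
      omega
    have : ps.coeff ν = b ν := by
      simp [FormalMultilinearSeries.coeff, hpsdef, FormalMultilinearSeries.ofScalars,
        smul_eq_mul, List.prod_ofFn]
    rw [this, hbdef]
    simp [he_zero ν hνp]
end

section
/- Let P̃(z) = Σ_{ν=0}^N ε_ν z^ν be a nonzero polynomial, K ⊂ ℂ compact, a > 0, and let p, q be positive integers with p, q > deg P̃. Then there exist c, d ∈ ℂ \ {0} such that the rational function R(z) = (P̃(z) + d z^p)/(1 − (c z)^q) satisfies: (i) 1 − (c z)^q ≠ 0 for all z ∈ K; (ii) sup_{z∈K} |P̃(z) − R(z)| < a; (iii) the Taylor coefficients β_ν of R around 0 satisfy β_ν = ε_ν for all ν ≤ deg P̃. -/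
open Polynomial Filter FormalMultilinearSeries Topology

set_option maxHeartbeats 1000000

lemma ofScalars_coeff' (β : ℕ → ℂ) (n : ℕ) :
    (FormalMultilinearSeries.ofScalars ℂ β).coeff n = β n := by
  simp [FormalMultilinearSeries.ofScalars, FormalMultilinearSeries.coeff,
    ContinuousMultilinearMap.smul_apply, ContinuousMultilinearMap.mkPiAlgebraFin_apply,
    List.prod_ofFn]

lemma shift_hasSum (σ : ℕ → ℂ) (g z : ℂ) (m : ℕ)
    (h : HasSum (fun n => z ^ n * σ n) g) :
    HasSum (fun n => z ^ n * (if n < m then 0 else σ (n - m))) (z ^ m * g) := by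
  have h2a : HasSum (fun n => z ^ (n + m) * σ n) (z ^ m * g) := by
    have := h.mul_left (z ^ m)
    refine this.congr_fun fun n => ?_
    rw [pow_add]; ring
  have h2b : (fun n => z ^ (n + m) * σ n) =
      fun n => z ^ (n + m) * (if n + m < m then 0 else σ (n + m - m)) := by
    funext n; rw [if_neg (by omega), Nat.add_sub_cancel]
  rw [h2b] at h2a
  have h2c := (hasSum_nat_add_iff (f := fun n => z ^ n * (if n < m then 0 else σ (n - m))) m).mp h2a
  have h2d : ∑ i ∈ Finset.range m, z ^ i * (if i < m then 0 else σ (i - m)) = 0 := by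
    apply Finset.sum_eq_zero; intro i hi
    rw [if_pos (Finset.mem_range.mp hi), mul_zero]
  rwa [h2d, add_zero] at h2c

lemma poly_hasSum (P : Polynomial ℂ) (z : ℂ) :
    HasSum (fun n => z ^ n * P.coeff n) (P.eval z) := by
  have hzero : ∀ n ∉ Finset.range (P.natDegree + 1), z ^ n * P.coeff n = 0 := by
    intro n hn
    rw [Finset.mem_range, not_lt] at hn
    rw [P.coeff_eq_zero_of_natDegree_lt (by omega), mul_zero]
  have := (hasSum_sum_of_ne_finset_zero hzero : HasSum _ _)
  convert this using 1
  rw [Polynomial.eval_eq_sum_range]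
  exact Finset.sum_congr rfl fun i _ => by ring

lemma taylor_part (P : Polynomial ℂ) (c d : ℂ) (p q : ℕ)
    (hp : P.natDegree < p) (hq : P.natDegree < q) :
    ∃ ps : FormalMultilinearSeries ℂ ℂ ℂ,
        HasFPowerSeriesAt (fun z => (P.eval z + d * z ^ p) / (1 - (c * z) ^ q)) ps 0 ∧
        ∀ ν ≤ P.natDegree, ps.coeff ν = P.coeff ν := by
  have hq0 : q ≠ 0 := by omega
  set N := P.natDegree with hN
  have hpm : N + 1 ≤ p := hp
  have hqm : N + 1 ≤ q := hq
  have hPanal : ∀ z : ℂ, AnalyticAt ℂ (fun w => P.eval w) z := by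
    intro z
    have := (analyticAt_id (𝕜 := ℂ) (z := z)).aeval_polynomial P
    simpa [Polynomial.coe_aeval_eq_eval] using this
  have hden0 : (1 : ℂ) - (c * 0) ^ q ≠ 0 := by simp [zero_pow hq0]
  have hanal : AnalyticAt ℂ (fun z : ℂ =>
      (d * z ^ (p - (N+1)) + c ^ q * P.eval z + c ^ q * P.eval z * z ^ (q - (N+1))
        - c ^ q * P.eval z) / (1 - (c * z) ^ q)) 0 := by
    apply AnalyticAt.div
    · exact (((analyticAt_const.mul (analyticAt_id.pow _))).add
        ((analyticAt_const.mul (hPanal 0)))).add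
        (((analyticAt_const.mul (hPanal 0))).mul (analyticAt_id.pow _)) |>.sub
        ((analyticAt_const.mul (hPanal 0)))
    · exact analyticAt_const.sub ((analyticAt_const.mul analyticAt_id).pow q)
    · exact hden0
  obtain ⟨s, hs⟩ := hanal
  set β : ℕ → ℂ := fun ν => P.coeff ν + if ν < N + 1 then 0 else s.coeff (ν - (N+1)) with hβ
  refine ⟨FormalMultilinearSeries.ofScalars ℂ β, ?_, ?_⟩
  · rw [hasFPowerSeriesAt_iff]
    have hev1 : ∀ᶠ z : ℂ in 𝓝 0, 1 - (c * z) ^ q ≠ 0 := by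
      have hcont : ContinuousAt (fun z : ℂ => 1 - (c * z) ^ q) 0 := by fun_prop
      exact hcont.eventually_ne hden0
    have hev2 := hasFPowerSeriesAt_iff.mp hs
    filter_upwards [hev1, hev2] with z hz hsum
    rw [zero_add] at hsum ⊢
    have hsum' : HasSum (fun n => z ^ n * s.coeff n)
        ((d * z ^ (p - (N+1)) + c ^ q * P.eval z + c ^ q * P.eval z * z ^ (q - (N+1))
        - c ^ q * P.eval z) / (1 - (c * z) ^ q)) := by
      refine hsum.congr_fun fun n => ?_
      rw [smul_eq_mul]
    have h2 := shift_hasSum s.coeff _ z (N+1) hsum'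
    have h1 := poly_hasSum P z
    have hsum2 := h1.add h2
    have hval : P.eval z +
        z ^ (N+1) * ((d * z ^ (p - (N+1)) + c ^ q * P.eval z + c ^ q * P.eval z * z ^ (q - (N+1))
        - c ^ q * P.eval z) / (1 - (c * z) ^ q))
        = (P.eval z + d * z ^ p) / (1 - (c * z) ^ q) := by
      rw [← mul_div_assoc, eq_div_iff hz, add_mul, div_mul_cancel₀ _ hz]
      have hzp : z ^ (N+1) * z ^ (p - (N+1)) = z ^ p := by
        rw [← pow_add, Nat.add_sub_cancel' hpm]
      have hzq : z ^ (N+1) * z ^ (q - (N+1)) = z ^ q := by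
        rw [← pow_add, Nat.add_sub_cancel' hqm]
      have key : z ^ (N+1) * (d * z ^ (p - (N+1)) + c ^ q * P.eval z
            + c ^ q * P.eval z * z ^ (q - (N+1)) - c ^ q * P.eval z)
          = d * z ^ p + c ^ q * P.eval z * z ^ q := by
        rw [show z ^ (N+1) * (d * z ^ (p - (N+1)) + c ^ q * P.eval z
            + c ^ q * P.eval z * z ^ (q - (N+1)) - c ^ q * P.eval z)
          = d * (z ^ (N+1) * z ^ (p - (N+1)))
            + c ^ q * P.eval z * (z ^ (N+1) * z ^ (q - (N+1))) by ring, hzp, hzq]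
      rw [key, mul_pow]
      ring
    rw [hval] at hsum2
    refine hsum2.congr_fun fun n => ?_
    rw [ofScalars_coeff', hβ, smul_eq_mul]
    simp only
    ring
  · intro ν hν
    rw [ofScalars_coeff', hβ]
    simp [Nat.lt_succ_of_le hν]


theorem lemma_2_4 (P : Polynomial ℂ) (hP : P ≠ 0) (K : Set ℂ) (hK : IsCompact K)
    (a : ℝ) (ha : 0 < a) (p q : ℕ) (hp : P.natDegree < p) (hq : P.natDegree < q) :
    ∃ c d : ℂ, c ≠ 0 ∧ d ≠ 0 ∧
      (∀ z ∈ K, 1 - (c * z) ^ q ≠ 0) ∧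
      (∀ z ∈ K, ‖P.eval z - (P.eval z + d * z ^ p) / (1 - (c * z) ^ q)‖ < a) ∧
      ∃ ps : FormalMultilinearSeries ℂ ℂ ℂ,
        HasFPowerSeriesAt (fun z => (P.eval z + d * z ^ p) / (1 - (c * z) ^ q)) ps 0 ∧
        ∀ ν ≤ P.natDegree, ps.coeff ν = P.coeff ν := by
  have hq0 : q ≠ 0 := by omega
  -- bound the set
  obtain ⟨M0, hM0⟩ := hK.isBounded.subset_closedBall 0
  set M : ℝ := max M0 1 with hM
  have hM1 : (1:ℝ) ≤ M := le_max_right _ _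
  have hM0' : 0 < M := lt_of_lt_of_le one_pos hM1
  have hMz : ∀ z ∈ K, ‖z‖ ≤ M := by
    intro z hz
    have := hM0 hz
    rw [Metric.mem_closedBall, dist_zero_right] at this
    exact this.trans (le_max_left _ _)
  -- bound the polynomial
  obtain ⟨C0, hC0⟩ := hK.exists_bound_of_continuousOn (P.continuous_aeval.continuousOn)
  set C : ℝ := max C0 1 with hC
  have hC1 : (1:ℝ) ≤ C := le_max_right _ _
  have hC0' : 0 < C := lt_of_lt_of_le one_pos hC1
  have hCz : ∀ z ∈ K, ‖P.eval z‖ ≤ C := by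
    intro z hz
    have := hC0 z hz
    rw [Polynomial.coe_aeval_eq_eval] at this
    exact this.trans (le_max_left _ _)
  -- choose c and d
  set t : ℝ := min (1 / (2 * M)) (a / (8 * C * M)) with ht
  have ht0 : 0 < t := lt_min (by positivity) (by positivity)
  set s : ℝ := a / (8 * M ^ p) with hs
  have hs0 : 0 < s := by positivity
  refine ⟨(t : ℂ), (s : ℂ), by exact_mod_cast ht0.ne', by exact_mod_cast hs0.ne', ?_, ?_, taylor_part P _ _ p q hp hq⟩
  all_goals {
    -- key norm bound
    have hkey : ∀ z ∈ K, ‖((t:ℂ) * z) ^ q‖ ≤ t * M := by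
      intro z hz
      rw [norm_pow, norm_mul, Complex.norm_real, Real.norm_of_nonneg ht0.le]
      calc (t * ‖z‖) ^ q ≤ (t * M) ^ q := by
            apply pow_le_pow_left₀ (by positivity)
            exact mul_le_mul_of_nonneg_left (hMz z hz) ht0.le
        _ ≤ t * M := by
            apply pow_le_of_le_one (by positivity) _ hq0
            calc t * M ≤ (1 / (2 * M)) * M := by
                  exact mul_le_mul_of_nonneg_right (min_le_left _ _) hM0'.le
              _ ≤ 1 := by rw [div_mul_eq_mul_div, one_mul, div_le_one (by positivity)]; nlinarith
    have htM_half : t * M ≤ 1 / 2 := by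
      calc t * M ≤ (1 / (2 * M)) * M := mul_le_mul_of_nonneg_right (min_le_left _ _) hM0'.le
        _ = 1/2 * (M / M) := by ring
        _ = 1/2 := by rw [div_self hM0'.ne']; ring
    have htM_aC : t * M ≤ a / (8 * C) := by
      calc t * M ≤ (a / (8 * C * M)) * M := mul_le_mul_of_nonneg_right (min_le_right _ _) hM0'.le
        _ = a / (8 * C) * (M / M) := by ring
        _ = a / (8 * C) := by rw [div_self hM0'.ne']; ring
    have hden : ∀ z ∈ K, (1:ℝ)/2 ≤ ‖1 - ((t:ℂ) * z) ^ q‖ := by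
      intro z hz
      have h1 : ‖(1:ℂ)‖ - ‖((t:ℂ) * z) ^ q‖ ≤ ‖1 - ((t:ℂ) * z) ^ q‖ := norm_sub_norm_le _ _
      have := (hkey z hz).trans htM_half
      rw [norm_one] at h1
      linarith
    first
    | { -- nonvanishing
        intro z hz
        intro h0
        have := hden z hz
        rw [h0, norm_zero] at this
        linarith }
    | { -- the estimate
        intro z hz
        have hdz : 1 - ((t:ℂ) * z) ^ q ≠ 0 := by
          intro h0
          have := hden z hz
          rw [h0, norm_zero] at this
          linarith
        have heq : P.eval z - (P.eval z + (s:ℂ) * z ^ p) / (1 - ((t:ℂ) * z) ^ q)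
            = (-(P.eval z * ((t:ℂ) * z) ^ q) - (s:ℂ) * z ^ p) / (1 - ((t:ℂ) * z) ^ q) := by
          field_simp
          ring
        rw [heq, norm_div]
        have hnum : ‖-(P.eval z * ((t:ℂ) * z) ^ q) - (s:ℂ) * z ^ p‖ ≤ a / 8 + a / 8 := by
          calc ‖-(P.eval z * ((t:ℂ) * z) ^ q) - (s:ℂ) * z ^ p‖
              ≤ ‖P.eval z * ((t:ℂ) * z) ^ q‖ + ‖(s:ℂ) * z ^ p‖ := by
                rw [← norm_neg (P.eval z * ((t:ℂ) * z) ^ q)] ; exact norm_sub_le _ _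
            _ ≤ C * (a / (8 * C)) + s * M ^ p := by
                gcongr
                · rw [norm_mul]
                  have h1 := hCz z hz
                  have h2 := (hkey z hz).trans htM_aC
                  have := mul_le_mul h1 h2 (norm_nonneg _) hC0'.le
                  exact this
                · rw [norm_mul, Complex.norm_real, Real.norm_of_nonneg hs0.le, norm_pow]
                  exact mul_le_mul_of_nonneg_left
                    (pow_le_pow_left₀ (norm_nonneg _) (hMz z hz) p) hs0.le
            _ = a / 8 * (C / C) + a / 8 * (M ^ p / M ^ p) := by rw [hs]; ring
            _ = a / 8 + a / 8 := by
                rw [div_self hC0'.ne', div_self (by positivity : (M:ℝ) ^ p ≠ 0)]; ring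
        calc ‖-(P.eval z * ((t:ℂ) * z) ^ q) - (s:ℂ) * z ^ p‖ / ‖1 - ((t:ℂ) * z) ^ q‖
            ≤ (a/8 + a/8) / (1/2 : ℝ) := by
              apply div_le_div₀ (by positivity) hnum (by norm_num) (hden z hz)
          _ = a / 2 := by ring
          _ < a := by linarith }
  }
end

section
/- Let A(z), B(z), P(z) be nonzero polynomials, K ⊂ ℂ compact, λ a positive integer with λ > deg P, and a > 0. Assume B(z) ≠ 0 for all z ∈ K and B(0) = 1. Then for any q ≥ deg B and any p > max{λ + deg A, q + deg P}, there exist c, d ∈ ℂ with |c|, |d| arbitrarily small and nonzero, such that with B̃(z) = B(z) + c z^q and Ã(z) = B̃(z)·P(z) + z^λ A(z) + d z^p, the rational function R(z) = Ã(z)/B̃(z) satisfies: (i) B̃(z) ≠ 0 for all z ∈ K ∪ {0}; (ii) sup_{z∈K} |R(z) − (P(z) + z^λ A(z)/B(z))| < a; (iii) the Taylor coefficients β_ν of R around 0 equal the coefficients of P for all ν ≤ deg P. -/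
open Polynomial in
theorem lemma_2_5 (A B P : Polynomial ℂ) (hA : A ≠ 0) (hB : B ≠ 0) (hP : P ≠ 0)
    (K : Set ℂ) (hK : IsCompact K) (lam : ℕ) (hlam : P.natDegree < lam)
    (a : ℝ) (ha : 0 < a)
    (hBK : ∀ z ∈ K, B.eval z ≠ 0) (hB0 : B.eval 0 = 1)
    (p q : ℕ) (hqB : B.natDegree ≤ q)
    (hp : max (lam + A.natDegree) (q + P.natDegree) < p) :
    ∀ ε > (0:ℝ), ∃ c d : ℂ, c ≠ 0 ∧ d ≠ 0 ∧ ‖c‖ < ε ∧ ‖d‖ < ε ∧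
      (∀ z ∈ K ∪ {0}, (B + C c * X ^ q).eval z ≠ 0) ∧
      (∀ z ∈ K,
        ‖((B + C c * X ^ q) * P + X ^ lam * A + C d * X ^ p).eval z /
            (B + C c * X ^ q).eval z
          - (P.eval z + z ^ lam * A.eval z / B.eval z)‖ < a) ∧
      ∃ ps : FormalMultilinearSeries ℂ ℂ ℂ,
        HasFPowerSeriesAt
          (fun z => ((B + C c * X ^ q) * P + X ^ lam * A + C d * X ^ p).eval z /
            (B + C c * X ^ q).eval z) ps 0 ∧
        ∀ ν ≤ P.natDegree, ps.coeff ν = P.coeff ν := by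
  intro ε hε
  -- bound on K
  obtain ⟨R0, hR0⟩ := hK.isBounded.exists_norm_le
  set RK : ℝ := max R0 1 with hRKdef
  have hRK1 : (1:ℝ) ≤ RK := le_max_right _ _
  have hRK0 : (0:ℝ) < RK := lt_of_lt_of_le one_pos hRK1
  have hRK : ∀ z ∈ K, ‖z‖ ≤ RK := fun z hz => le_trans (hR0 z hz) (le_max_left _ _)
  -- bound on A on K
  obtain ⟨C0, hC0⟩ := (hK.image A.continuous).isBounded.exists_norm_le
  set CA : ℝ := max C0 1 with hCAdef
  have hCA1 : (1:ℝ) ≤ CA := le_max_right _ _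
  have hCA0 : (0:ℝ) < CA := lt_of_lt_of_le one_pos hCA1
  have hCA : ∀ z ∈ K, ‖A.eval z‖ ≤ CA := fun z hz =>
    le_trans (hC0 _ (Set.mem_image_of_mem _ hz)) (le_max_left _ _)
  -- lower bound for B on K
  have hm : ∃ m : ℝ, 0 < m ∧ ∀ z ∈ K, m ≤ ‖B.eval z‖ := by
    rcases K.eq_empty_or_nonempty with hKe | hKne
    · exact ⟨1, one_pos, by simp [hKe]⟩
    · obtain ⟨x, hxK, hx⟩ := hK.exists_isMinOn hKne
        ((continuous_norm.comp B.continuous).continuousOn)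
      exact ⟨‖B.eval x‖, norm_pos_iff.mpr (hBK x hxK), fun z hz => hx hz⟩
  obtain ⟨m, hm0, hm⟩ := hm
  -- the error constant
  set E : ℝ := RK ^ (lam + q) * CA * (2 / (m * m)) + RK ^ p * (2 / m) with hEdef
  have hE0 : 0 < E := by positivity
  -- choose t
  set t : ℝ := min ε (min (m / (2 * RK ^ q)) (a / E)) / 2 with htdef
  have ht0 : 0 < t := by positivity
  have htε : t < ε := by
    have h1 : min ε (min (m / (2 * RK ^ q)) (a / E)) ≤ ε := min_le_left _ _
    rw [htdef]; linarith
  have htq : t * RK ^ q ≤ m / 2 := by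
    have h1 : t ≤ m / (2 * RK ^ q) := by
      have := le_trans (min_le_right ε _) (min_le_left (m / (2 * RK ^ q)) (a / E))
      rw [htdef]
      have h2 : (0:ℝ) < m / (2 * RK ^ q) := by positivity
      linarith
    have h2 : t * RK ^ q ≤ m / (2 * RK ^ q) * RK ^ q :=
      mul_le_mul_of_nonneg_right h1 (by positivity)
    have h3 : m / (2 * RK ^ q) * RK ^ q = m / 2 := by
      field_simp
    exact h2.trans_eq h3
  have htE : t * E < a := by
    have h1 : t ≤ a / E / 2 := by
      have := le_trans (min_le_right ε _) (min_le_right (m / (2 * RK ^ q)) (a / E))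
      rw [htdef]; linarith
    have h2 : t * E ≤ a / E / 2 * E := mul_le_mul_of_nonneg_right h1 (le_of_lt hE0)
    have h3 : a / E / 2 * E = a / 2 := by field_simp
    exact lt_of_le_of_lt (h2.trans_eq h3) (by linarith)
  -- the perturbation
  set c : ℂ := (t : ℂ) with hcdef
  have hcne : c ≠ 0 := by
    simp only [hcdef, ne_eq, Complex.ofReal_eq_zero]; exact ne_of_gt ht0
  have hcnorm : ‖c‖ = t := by
    rw [hcdef, Complex.norm_real, Real.norm_eq_abs, abs_of_pos ht0]
  -- B tilde lower bound on K
  have hBt : ∀ z ∈ K, m / 2 ≤ ‖(B + C c * X ^ q).eval z‖ := by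
    intro z hz
    have h1 : ‖c * z ^ q‖ ≤ m / 2 := by
      rw [norm_mul, norm_pow, hcnorm]
      calc t * ‖z‖ ^ q ≤ t * RK ^ q := by
            exact mul_le_mul_of_nonneg_left
              (pow_le_pow_left₀ (norm_nonneg z) (hRK z hz) q) (le_of_lt ht0)
        _ ≤ m / 2 := htq
    have h2 : ‖B.eval z‖ ≤ ‖B.eval z + c * z ^ q‖ + ‖c * z ^ q‖ := by
      calc ‖B.eval z‖ = ‖B.eval z + c * z ^ q + -(c * z ^ q)‖ := by ring_nf
        _ ≤ ‖B.eval z + c * z ^ q‖ + ‖-(c * z ^ q)‖ := norm_add_le _ _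
        _ = ‖B.eval z + c * z ^ q‖ + ‖c * z ^ q‖ := by rw [norm_neg]
    have h3 := hm z hz
    simp only [eval_add, eval_mul, eval_pow, eval_C, eval_X]
    linarith
  have hBtne : ∀ z ∈ K, (B + C c * X ^ q).eval z ≠ 0 := by
    intro z hz h
    have := hBt z hz
    rw [h, norm_zero] at this
    linarith
  -- B tilde at 0
  have hBt0 : (B + C c * X ^ q).eval 0 ≠ 0 := by
    simp only [eval_add, eval_mul, eval_pow, eval_C, eval_X, hB0]
    rcases q with _ | q'
    · rw [pow_zero, mul_one]
      have : (1 : ℂ) + c = ((1 + t : ℝ) : ℂ) := by rw [hcdef]; push_cast; ring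
      rw [this]
      exact_mod_cast Complex.ofReal_ne_zero.mpr (by linarith)
    · simp
  refine ⟨c, c, hcne, hcne, by rw [hcnorm]; exact htε, by rw [hcnorm]; exact htε, ?_, ?_, ?_⟩
  · rintro z (hz | hz)
    · exact hBtne z hz
    · simp only [Set.mem_singleton_iff] at hz; subst hz; exact hBt0
  · -- approximation bound
    intro z hz
    have hBz := hBK z hz
    have hBtz := hBtne z hz
    have hBtz' : B.eval z + c * z ^ q ≠ 0 := by
      simpa only [eval_add, eval_mul, eval_pow, eval_C, eval_X] using hBtz
    have key : ((B + C c * X ^ q) * P + X ^ lam * A + C c * X ^ p).eval z /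
          (B + C c * X ^ q).eval z - (P.eval z + z ^ lam * A.eval z / B.eval z)
        = -(c * z ^ (lam + q) * A.eval z) / ((B.eval z + c * z ^ q) * B.eval z)
          + c * z ^ p / (B.eval z + c * z ^ q) := by
      simp only [eval_add, eval_mul, eval_pow, eval_C, eval_X]
      field_simp
      ring
    rw [key]
    have hnz : ‖z‖ ≤ RK := hRK z hz
    have hBtnorm : m / 2 ≤ ‖B.eval z + c * z ^ q‖ := by
      simpa only [eval_add, eval_mul, eval_pow, eval_C, eval_X] using hBt z hz
    have hBnorm : m ≤ ‖B.eval z‖ := hm z hz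
    have b1 : ‖-(c * z ^ (lam + q) * A.eval z) / ((B.eval z + c * z ^ q) * B.eval z)‖
        ≤ t * RK ^ (lam + q) * CA / (m / 2 * m) := by
      rw [norm_div, norm_neg, norm_mul, norm_mul, norm_mul, norm_pow, hcnorm]
      apply div_le_div₀ (by positivity)
      · exact mul_le_mul (mul_le_mul le_rfl
          (pow_le_pow_left₀ (norm_nonneg z) hnz _) (by positivity) (by positivity))
          (hCA z hz) (norm_nonneg _) (by positivity)
      · positivity
      · exact mul_le_mul hBtnorm hBnorm hm0.le (norm_nonneg _)
    have b2 : ‖c * z ^ p / (B.eval z + c * z ^ q)‖ ≤ t * RK ^ p / (m / 2) := by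
      rw [norm_div, norm_mul, norm_pow, hcnorm]
      apply div_le_div₀ (by positivity)
      · exact mul_le_mul le_rfl (pow_le_pow_left₀ (norm_nonneg z) hnz _)
          (by positivity) (le_of_lt ht0)
      · positivity
      · exact hBtnorm
    have hsum : t * RK ^ (lam + q) * CA / (m / 2 * m) + t * RK ^ p / (m / 2) = t * E := by
      rw [hEdef]; field_simp
    calc ‖-(c * z ^ (lam + q) * A.eval z) / ((B.eval z + c * z ^ q) * B.eval z)
          + c * z ^ p / (B.eval z + c * z ^ q)‖
        ≤ ‖-(c * z ^ (lam + q) * A.eval z) / ((B.eval z + c * z ^ q) * B.eval z)‖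
          + ‖c * z ^ p / (B.eval z + c * z ^ q)‖ := norm_add_le _ _
      _ ≤ t * RK ^ (lam + q) * CA / (m / 2 * m) + t * RK ^ p / (m / 2) := by linarith
      _ = t * E := hsum
      _ < a := htE
  · -- power series
    have hlamp : lam ≤ p := by
      have := lt_of_le_of_lt (le_max_left (lam + A.natDegree) (q + P.natDegree)) hp
      omega
    set Bt : Polynomial ℂ := B + C c * X ^ q with hBtdef
    set N : Polynomial ℂ := A + C c * X ^ (p - lam) with hNdef
    have hXN : X ^ lam * A + C c * X ^ p = X ^ lam * N := by
      rw [hNdef, mul_add]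
      congr 1
      rw [mul_comm (X ^ lam : Polynomial ℂ), mul_assoc, ← pow_add]
      congr 2
      omega
    have hNan : AnalyticAt ℂ (fun z => N.eval z / Bt.eval z) 0 := by
      refine AnalyticAt.div ?_ ?_ hBt0
      · exact (AnalyticOnNhd.eval_polynomial (𝕜 := ℂ) N) 0 (Set.mem_univ 0)
      · exact (AnalyticOnNhd.eval_polynomial (𝕜 := ℂ) Bt) 0 (Set.mem_univ 0)
    obtain ⟨qs, hqs⟩ := hNan
    set cs : ℕ → ℂ := fun n => P.coeff n + if lam ≤ n then qs.coeff (n - lam) else 0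
      with hcsdef
    refine ⟨FormalMultilinearSeries.ofScalars ℂ cs, ?_, ?_⟩
    · rw [hasFPowerSeriesAt_iff]
      have hev1 := hasFPowerSeriesAt_iff.mp hqs
      have hev2 : ∀ᶠ z in nhds (0:ℂ), Bt.eval z ≠ 0 :=
        (Bt.continuous.continuousAt).eventually_ne hBt0
      filter_upwards [hev1, hev2] with z hz hBz
      simp only [zero_add] at hz ⊢
      have hcoeff : ∀ n, (FormalMultilinearSeries.ofScalars ℂ cs).coeff n = cs n := by
        intro n
        simp [FormalMultilinearSeries.ofScalars, FormalMultilinearSeries.coeff,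
          List.prod_ofFn]
      have S1 : HasSum (fun n => z ^ n • P.coeff n) (P.eval z) := by
        have hvan : ∀ n ∉ Finset.range (P.natDegree + 1), z ^ n • P.coeff n = 0 := by
          intro n hn
          rw [Finset.mem_range, not_lt] at hn
          rw [P.coeff_eq_zero_of_natDegree_lt (by omega), smul_zero]
        have : HasSum (fun n => z ^ n • P.coeff n)
            (∑ n ∈ Finset.range (P.natDegree + 1), z ^ n • P.coeff n) :=
          hasSum_sum_of_ne_finset_zero hvan
        convert this using 1
        rw [Polynomial.eval_eq_sum_range]
        exact Finset.sum_congr rfl fun n _ => by rw [smul_eq_mul, mul_comm]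
      have S2 : HasSum (fun n => z ^ n • (if lam ≤ n then qs.coeff (n - lam) else 0))
          (z ^ lam * (N.eval z / Bt.eval z)) := by
        have h1 := hz.mul_left (z ^ lam)
        have hinj : Function.Injective (fun n : ℕ => n + lam) := fun x y h => by
          simpa using h
        rw [← Function.Injective.hasSum_iff hinj ?_]
        · have heq : ((fun n => z ^ n • (if lam ≤ n then qs.coeff (n - lam) else 0))
              ∘ (fun n : ℕ => n + lam)) = fun n => z ^ lam * (z ^ n • qs.coeff n) := by
            funext n
            simp only [Function.comp_apply, add_tsub_cancel_right,
              if_pos (Nat.le_add_left lam n)]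
            rw [smul_eq_mul, smul_eq_mul, pow_add]
            ring
          rw [heq]
          exact h1
        · intro x hx
          simp only [Set.mem_range, not_exists] at hx
          have hxl : x < lam := by
            by_contra hxl
            exact hx (x - lam) (by omega)
          rw [if_neg (by omega), smul_zero]
      have S := S1.add S2
      have hfun : (fun n => z ^ n • (FormalMultilinearSeries.ofScalars ℂ cs).coeff n)
          = fun n => z ^ n • P.coeff n
            + z ^ n • (if lam ≤ n then qs.coeff (n - lam) else 0) := by
        funext n
        rw [hcoeff, hcsdef, smul_add]
      rw [hfun]
      have hval : ((B + C c * X ^ q) * P + X ^ lam * A + C c * X ^ p).eval z /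
          (B + C c * X ^ q).eval z
          = P.eval z + z ^ lam * (N.eval z / Bt.eval z) := by
        rw [add_assoc, hXN, ← hBtdef]
        simp only [eval_add, eval_mul, eval_pow, eval_X]
        field_simp
      rw [hval]
      exact S
    · intro ν hν
      have hcoeff : ∀ n, (FormalMultilinearSeries.ofScalars ℂ cs).coeff n = cs n := by
        intro n
        simp [FormalMultilinearSeries.ofScalars, FormalMultilinearSeries.coeff,
          List.prod_ofFn]
      rw [hcoeff, hcsdef]
      simp only
      rw [if_neg (by omega), add_zero]
end

section
/- Let K ⊂ ℂ be compact with 0 ∉ K and with connected complement K^c. Let D̄ be a closed disk centered at 0 with radius r > 0 such that D̄ ∩ K = ∅. Let P(z) and Q(z) be polynomials. Then for every ε > 0 there exists a polynomial P̃(z) such that: (i) sup_{z∈D̄} |P̃(z) − P(z)| < ε; (ii) sup_{z∈K} |P̃(z) − Q(z)| < ε; (iii) some partial sum of P̃ (i.e., the truncation of P̃ to degrees < λ for some λ > deg P) is exactly P. -/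
open Polynomial Metric Set Complex Finset

namespace Lemma27

/-- `f` is uniformly approximable by polynomials on `L`. -/
def Ap (L : Set ℂ) (f : ℂ → ℂ) : Prop :=
  ∀ ε > (0:ℝ), ∃ p : Polynomial ℂ, ∀ z ∈ L, ‖p.eval z - f z‖ ≤ ε

variable {L : Set ℂ} {f g : ℂ → ℂ}

lemma Ap.of_poly (p : Polynomial ℂ) : Ap L (fun z => p.eval z) := by
  intro ε hε
  exact ⟨p, fun z _ => by simp [hε.le]⟩

lemma Ap.const (c : ℂ) : Ap L (fun _ => c) := by
  simpa using Ap.of_poly (L := L) (C c)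

lemma Ap.add (hf : Ap L f) (hg : Ap L g) : Ap L (fun z => f z + g z) := by
  intro ε hε
  obtain ⟨p, hp⟩ := hf (ε/2) (by positivity)
  obtain ⟨q, hq⟩ := hg (ε/2) (by positivity)
  refine ⟨p + q, fun z hz => ?_⟩
  have : p.eval z + q.eval z - (f z + g z) = (p.eval z - f z) + (q.eval z - g z) := by ring
  calc ‖(p+q).eval z - (f z + g z)‖ = ‖(p.eval z - f z) + (q.eval z - g z)‖ := by
        rw [Polynomial.eval_add, this]
    _ ≤ ‖p.eval z - f z‖ + ‖q.eval z - g z‖ := norm_add_le _ _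
    _ ≤ ε/2 + ε/2 := add_le_add (hp z hz) (hq z hz)
    _ = ε := by ring

lemma Ap.smul (c : ℂ) (hf : Ap L f) : Ap L (fun z => c * f z) := by
  intro ε hε
  obtain ⟨p, hp⟩ := hf (ε/(‖c‖+1)) (by positivity)
  refine ⟨C c * p, fun z hz => ?_⟩
  have h1 : (C c * p).eval z - c * f z = c * (p.eval z - f z) := by
    simp [Polynomial.eval_mul]; ring
  rw [h1, norm_mul]
  calc ‖c‖ * ‖p.eval z - f z‖ ≤ ‖c‖ * (ε/(‖c‖+1)) :=
        mul_le_mul_of_nonneg_left (hp z hz) (norm_nonneg _)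
    _ ≤ ε := by
        rw [mul_div_assoc']
        rw [div_le_iff₀ (by positivity)]
        nlinarith [norm_nonneg c, hε.le]

lemma Ap.mul {Cf Cg : ℝ} (hCf0 : 0 ≤ Cf) (hCg0 : 0 ≤ Cg) (hf : Ap L f) (hg : Ap L g)
    (hCf : ∀ z ∈ L, ‖f z‖ ≤ Cf) (hCg : ∀ z ∈ L, ‖g z‖ ≤ Cg) :
    Ap L (fun z => f z * g z) := by
  intro ε hε
  set δ : ℝ := min 1 (ε/(Cf + Cg + 2)) with hδdef
  have hδpos : 0 < δ := lt_min one_pos (by positivity)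
  obtain ⟨p, hp⟩ := hf δ hδpos
  obtain ⟨q, hq⟩ := hg δ hδpos
  refine ⟨p * q, fun z hz => ?_⟩
  have key : (p*q).eval z - f z * g z
      = p.eval z * (q.eval z - g z) + g z * (p.eval z - f z) := by
    rw [Polynomial.eval_mul]; ring
  have hpz : ‖p.eval z‖ ≤ Cf + δ := by
    calc ‖p.eval z‖ = ‖f z + (p.eval z - f z)‖ := by ring_nf
      _ ≤ ‖f z‖ + ‖p.eval z - f z‖ := norm_add_le _ _
      _ ≤ Cf + δ := add_le_add (hCf z hz) (hp z hz)
  calc ‖(p*q).eval z - f z * g z‖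
      ≤ ‖p.eval z‖ * ‖q.eval z - g z‖ + ‖g z‖ * ‖p.eval z - f z‖ := by
        rw [key]; exact (norm_add_le _ _).trans (by rw [norm_mul, norm_mul])
    _ ≤ (Cf + δ) * δ + Cg * δ := by
        have h1 : ‖p.eval z‖ * ‖q.eval z - g z‖ ≤ (Cf + δ) * δ :=
          mul_le_mul hpz (hq z hz) (norm_nonneg _) (by positivity)
        have h2 : ‖g z‖ * ‖p.eval z - f z‖ ≤ Cg * δ :=
          mul_le_mul (hCg z hz) (hp z hz) (norm_nonneg _) hCg0
        exact add_le_add h1 h2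
    _ ≤ (Cf + 1) * δ + Cg * δ := by
        have : δ ≤ 1 := min_le_left _ _
        nlinarith
    _ = (Cf + Cg + 1) * δ := by ring
    _ ≤ (Cf + Cg + 1) * (ε/(Cf + Cg + 2)) := by
        have : δ ≤ ε/(Cf + Cg + 2) := min_le_right _ _
        nlinarith
    _ ≤ ε := by
        rw [mul_div_assoc']
        rw [div_le_iff₀ (by positivity)]
        nlinarith

lemma Ap.pow {C : ℝ} (hC0 : 0 ≤ C) (hf : Ap L f) (hC : ∀ z ∈ L, ‖f z‖ ≤ C) (k : ℕ) :
    Ap L (fun z => (f z)^k) := by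
  induction k with
  | zero => simpa using Ap.const (L := L) 1
  | succ k ih =>
      have := Ap.mul (L := L) hC0 (pow_nonneg hC0 k) hf ih hC
        (fun z hz => by
          calc ‖f z ^ k‖ = ‖f z‖^k := norm_pow _ _
            _ ≤ C^k := pow_le_pow_left₀ (norm_nonneg _) (hC z hz) k)
      simpa [pow_succ, mul_comm] using this

lemma Ap.sum {ι : Type*} (s : Finset ι) (F : ι → ℂ → ℂ) (h : ∀ i ∈ s, Ap L (F i)) :
    Ap L (fun z => ∑ i ∈ s, F i z) := by
  classical
  induction s using Finset.induction_on with
  | empty => simpa using Ap.const (L := L) 0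
  | @insert a s' hx ih =>
      have h1 : Ap L (F a) := h a (Finset.mem_insert_self _ _)
      have h2 : Ap L (fun z => ∑ i ∈ s', F i z) := ih (fun i hi => h i (Finset.mem_insert_of_mem hi))
      have := h1.add h2
      refine fun ε hε => ?_
      obtain ⟨p, hp⟩ := this ε hε
      exact ⟨p, fun z hz => by simpa [Finset.sum_insert hx] using hp z hz⟩



lemma ap_resolvent_far {R : ℝ} (hR : 0 ≤ R) (hL : ∀ z ∈ L, ‖z‖ ≤ R) {a : ℂ}
    (ha : 2*R + 1 ≤ ‖a‖) : Ap L (fun z => (z - a)⁻¹) := by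
  intro ε hε
  obtain ⟨m, hm⟩ := exists_pow_lt_of_lt_one hε (by norm_num : (1/2:ℝ) < 1)
  refine ⟨∑ k ∈ range m, Polynomial.C (-(a⁻¹)^(k+1)) * X^k, fun z hz => ?_⟩
  have hA : (0:ℝ) < ‖a‖ := by linarith
  have ha0 : a ≠ 0 := by simpa using hA.ne'
  have hza : R + 1 ≤ ‖z - a‖ := by
    have h1 : ‖a‖ - ‖z‖ ≤ ‖z - a‖ := by
      have := norm_sub_norm_le a z
      rw [norm_sub_rev] at this
      linarith
    have h2 := hL z hz
    linarith
  have hza0 : z - a ≠ 0 := by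
    intro h; rw [h] at hza; simp at hza; linarith
  have hx1 : z * a⁻¹ - 1 ≠ 0 := by
    have h : z * a⁻¹ - 1 = (z - a) * a⁻¹ := by field_simp
    rw [h]
    exact mul_ne_zero hza0 (inv_ne_zero ha0)
  have heval : (∑ k ∈ range m, Polynomial.C (-(a⁻¹)^(k+1)) * X^k).eval z
      = -a⁻¹ * ∑ k ∈ range m, (z * a⁻¹)^k := by
    rw [Polynomial.eval_finset_sum, Finset.mul_sum]
    refine Finset.sum_congr rfl fun k _ => ?_
    simp [mul_pow, pow_succ]
    ring
  have key : (∑ k ∈ range m, Polynomial.C (-(a⁻¹)^(k+1)) * X^k).eval z - (z - a)⁻¹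
      = -(z*a⁻¹)^m * (z-a)⁻¹ := by
    rw [heval]
    have hgeom := geom_sum_mul (z*a⁻¹) m
    have ha' : a * a⁻¹ = 1 := mul_inv_cancel₀ ha0
    have hz' : (z-a) * (z-a)⁻¹ = 1 := mul_inv_cancel₀ hza0
    linear_combination (-(z-a)⁻¹) * hgeom
      + ((∑ k ∈ range m, (z*a⁻¹)^k) * (z-a)⁻¹) * ha'
      + ((∑ k ∈ range m, (z*a⁻¹)^k) * a⁻¹) * hz'
  rw [key]
  simp only [norm_mul, norm_neg, norm_pow, norm_inv]
  have h1 : ‖z‖ * ‖a‖⁻¹ ≤ 1/2 := by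
    have h2 : ‖z‖ * ‖a‖⁻¹ ≤ R * (2*R+1)⁻¹ :=
      mul_le_mul (hL z hz) (inv_anti₀ (by linarith) ha) (by positivity) hR
    have h3 : R * (2*R+1)⁻¹ ≤ 1/2 := by
      rw [inv_eq_one_div, mul_one_div, div_le_div_iff₀ (by linarith) (by norm_num)]
      linarith
    linarith
  have h4 : ‖(z-a)‖⁻¹ ≤ 1 := by
    rw [inv_le_one_iff₀]
    right; linarith
  calc (‖z‖ * ‖a‖⁻¹)^m * ‖z - a‖⁻¹ ≤ (1/2)^m * 1 := by
        apply mul_le_mul _ h4 (by positivity) (by positivity)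
        exact pow_le_pow_left₀ (by positivity) h1 m
    _ = (1/2)^m := by ring
    _ ≤ ε := hm.le

lemma ap_resolvent_push {δ : ℝ} {a b : ℂ} (hδ : 0 < δ)
    (hb : ∀ z ∈ L, δ ≤ ‖z - b‖) (hab : ‖a - b‖ ≤ δ/2)
    (hB : Ap L (fun z => (z - b)⁻¹)) : Ap L (fun z => (z - a)⁻¹) := by
  intro ε hε
  obtain ⟨m, hm⟩ := exists_pow_lt_of_lt_one (show (0:ℝ) < ε*δ/4 by positivity)
    (by norm_num : (1/2:ℝ) < 1)
  -- approximate the partial geometric sum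
  have hsum : Ap L (fun z => ∑ k ∈ range m, (a-b)^k * ((z - b)⁻¹)^(k+1)) := by
    apply Ap.sum
    intro k _
    exact Ap.smul _ (Ap.pow (C := δ⁻¹) (by positivity) hB
      (fun z hz => by
        rw [norm_inv]
        exact inv_anti₀ hδ (hb z hz)) (k+1))
  obtain ⟨p, hp⟩ := hsum (ε/2) (by positivity)
  refine ⟨p, fun z hz => ?_⟩
  have hzb : δ ≤ ‖z - b‖ := hb z hz
  have hzb0 : z - b ≠ 0 := by
    intro h; rw [h] at hzb; simp at hzb; linarith
  have hza : δ/2 ≤ ‖z - a‖ := by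
    have h1 : ‖z - b‖ - ‖a - b‖ ≤ ‖z - a‖ := by
      have := norm_sub_le (z - a) (a - b)
      have h2 : z - a - (a - b) = z - (2*a - b) := by ring
      have h3 : ‖z - b‖ ≤ ‖z - a‖ + ‖a - b‖ := by
        calc ‖z - b‖ = ‖(z - a) + (a - b)‖ := by ring_nf
          _ ≤ ‖z - a‖ + ‖a - b‖ := norm_add_le _ _
      linarith
    linarith
  have hza0 : z - a ≠ 0 := by
    intro h; rw [h] at hza; simp at hza; linarith
  have hx1 : (a - b) * (z - b)⁻¹ - 1 ≠ 0 := by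
    have h : (a - b) * (z - b)⁻¹ - 1 = (a - z) * (z - b)⁻¹ := by field_simp; ring
    rw [h]
    exact mul_ne_zero (fun hh => hza0 (by rw [← neg_sub a z, hh, neg_zero])) (inv_ne_zero hzb0)
  have key : (∑ k ∈ range m, (a-b)^k * ((z - b)⁻¹)^(k+1)) - (z - a)⁻¹
      = -((a-b)*(z-b)⁻¹)^m * (z-a)⁻¹ := by
    have heval : (∑ k ∈ range m, (a-b)^k * ((z - b)⁻¹)^(k+1))
        = (z-b)⁻¹ * ∑ k ∈ range m, ((a-b)*(z-b)⁻¹)^k := by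
      rw [Finset.mul_sum]
      refine Finset.sum_congr rfl fun k _ => ?_
      rw [mul_pow, pow_succ]
      ring
    rw [heval]
    have hgeom := geom_sum_mul ((a-b)*(z-b)⁻¹) m
    have hb' : (z-b) * (z-b)⁻¹ = 1 := mul_inv_cancel₀ hzb0
    have hz' : (z-a) * (z-a)⁻¹ = 1 := mul_inv_cancel₀ hza0
    linear_combination (-(z-a)⁻¹) * hgeom
      + ((∑ k ∈ range m, ((a-b)*(z-b)⁻¹)^k) * (z-a)⁻¹) * hb'
      - ((∑ k ∈ range m, ((a-b)*(z-b)⁻¹)^k) * (z-b)⁻¹) * hz'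
  calc ‖p.eval z - (z-a)⁻¹‖
      = ‖(p.eval z - ∑ k ∈ range m, (a-b)^k * ((z - b)⁻¹)^(k+1))
          + ((∑ k ∈ range m, (a-b)^k * ((z - b)⁻¹)^(k+1)) - (z-a)⁻¹)‖ := by congr 1; ring
    _ ≤ ‖p.eval z - ∑ k ∈ range m, (a-b)^k * ((z - b)⁻¹)^(k+1)‖
          + ‖(∑ k ∈ range m, (a-b)^k * ((z - b)⁻¹)^(k+1)) - (z-a)⁻¹‖ := norm_add_le _ _
    _ ≤ ε/2 + ε/2 := by
        refine add_le_add (hp z hz) ?_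
        rw [key]
        simp only [norm_mul, norm_neg, norm_pow, norm_inv]
        have h1 : ‖a - b‖ * ‖z - b‖⁻¹ ≤ 1/2 := by
          have h2 : ‖a-b‖ * ‖z-b‖⁻¹ ≤ (δ/2) * δ⁻¹ :=
            mul_le_mul hab (inv_anti₀ hδ hzb) (by positivity) (by positivity)
          rw [div_mul_eq_mul_div, mul_inv_cancel₀ hδ.ne'] at h2
          · linarith
        have h2 : ‖z - a‖⁻¹ ≤ 2/δ := by
          have := inv_anti₀ (show (0:ℝ) < δ/2 by positivity) hza
          rw [show ((δ:ℝ)/2)⁻¹ = 2/δ by rw [inv_div]] at this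
          exact this
        calc (‖a-b‖ * ‖z-b‖⁻¹)^m * ‖z-a‖⁻¹ ≤ (1/2)^m * (2/δ) := by
              apply mul_le_mul _ h2 (by positivity) (by positivity)
              exact pow_le_pow_left₀ (by positivity) h1 m
          _ ≤ (ε*δ/4) * (2/δ) := by
              apply mul_le_mul_of_nonneg_right hm.le (by positivity)
          _ = ε/2 := by field_simp; ring
    _ = ε := by ring



lemma isPreconnected_ball_diff_center (c : ℂ) {s : ℝ} (hs : 0 < s) :
    IsPreconnected (Metric.ball c s \ {c}) := by
  have hrank : 1 < Module.rank ℝ ℂ := by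
    rw [Complex.rank_real_complex]
    norm_num
  have hpc : IsPathConnected ({(0:ℂ)}ᶜ) :=
    isPathConnected_compl_singleton_of_one_lt_rank hrank 0
  set ψ : ℂ → ℂ := fun z => c + ((s/(1+‖z‖) : ℝ) : ℂ) * z with hψdef
  have hψ : ∀ z, ψ z = c + ((s/(1+‖z‖) : ℝ) : ℂ) * z := fun z => rfl
  have hcont : Continuous ψ := by
    apply continuous_const.add
    apply Continuous.mul _ continuous_id
    exact Complex.continuous_ofReal.comp
      (continuous_const.div (continuous_const.add continuous_norm) (fun z => by positivity))
  have himg : ψ '' ({(0:ℂ)}ᶜ) = Metric.ball c s \ {c} := by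
    ext w
    constructor
    · rintro ⟨z, hz, rfl⟩
      have hz0 : z ≠ 0 := hz
      have hpos : 0 < s/(1+‖z‖) := by positivity
      constructor
      · rw [Metric.mem_ball, dist_eq_norm]
        have h1 : ψ z - c = ((s/(1+‖z‖) : ℝ) : ℂ) * z := by rw [hψ]; ring
        rw [h1, norm_mul, Complex.norm_real, Real.norm_of_nonneg hpos.le]
        rw [div_mul_eq_mul_div, div_lt_iff₀ (by positivity)]
        nlinarith [norm_pos_iff.mpr hz0, norm_nonneg z]
      · simp only [mem_singleton_iff]
        intro h
        apply hz0
        rw [hψ, add_eq_left] at h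
        rcases mul_eq_zero.mp h with h1 | h1
        · exact absurd (Complex.ofReal_eq_zero.mp h1) (ne_of_gt hpos)
        · exact h1
    · rintro ⟨hwball, hwc⟩
      have hwc' : w - c ≠ 0 := sub_ne_zero.mpr hwc
      have hwn : 0 < ‖w - c‖ := norm_pos_iff.mpr hwc'
      have hws : ‖w - c‖ < s := by rw [Metric.mem_ball, dist_eq_norm] at hwball; exact hwball
      have hd : (0:ℝ) < s - ‖w-c‖ := by linarith
      refine ⟨((1/(s - ‖w-c‖) : ℝ) : ℂ) * (w - c), ?_, ?_⟩
      · simp only [mem_compl_iff, mem_singleton_iff]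
        intro h
        rcases mul_eq_zero.mp h with h1 | h1
        · have h2 := Complex.ofReal_eq_zero.mp h1
          rw [_root_.div_eq_zero_iff] at h2
          rcases h2 with h2 | h2
          · norm_num at h2
          · linarith
        · exact hwc' h1
      · rw [hψ]
        have hnorm : ‖((1/(s - ‖w-c‖) : ℝ) : ℂ) * (w - c)‖ = ‖w-c‖/(s - ‖w-c‖) := by
          rw [norm_mul, Complex.norm_real, Real.norm_of_nonneg (one_div_pos.mpr hd).le, one_div,
            inv_mul_eq_div]
        rw [hnorm]
        have hfac : (s/(1 + ‖w-c‖/(s - ‖w-c‖)) : ℝ) = s - ‖w-c‖ := by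
          rw [div_eq_iff (by positivity)]
          rw [mul_add, mul_one, mul_div_cancel₀ _ hd.ne']
          ring
        rw [hfac]
        have h3 : ((s - ‖w-c‖ : ℝ) : ℂ) * (((1/(s - ‖w-c‖) : ℝ) : ℂ) * (w - c)) = w - c := by
          rw [← mul_assoc, ← Complex.ofReal_mul, mul_one_div, div_self hd.ne']
          simp
        rw [h3]
        ring
  rw [← himg]
  exact (hpc.image hcont).isConnected.isPreconnected






lemma isPreconnected_diff_singleton {U : Set ℂ} (hUo : IsOpen U) (hUc : IsPreconnected U)
    (c : ℂ) : IsPreconnected (U \ {c}) := by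
  by_cases hc : c ∈ U
  swap
  · rwa [Set.diff_singleton_eq_self hc]
  obtain ⟨s, hs, hball⟩ := Metric.isOpen_iff.mp hUo c hc
  set V := U \ {c} with hV
  have hVo : IsOpen V := hUo.sdiff isClosed_singleton
  have hPB : IsPreconnected (Metric.ball c s \ {c}) := isPreconnected_ball_diff_center c hs
  have hPBV : Metric.ball c s \ {c} ⊆ V := fun x hx => ⟨hball hx.1, hx.2⟩
  set x₀ : ℂ := c + ((s/2 : ℝ) : ℂ) with hx₀
  have hx₀PB : x₀ ∈ Metric.ball c s \ {c} := by
    constructor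
    · rw [Metric.mem_ball, dist_eq_norm]
      have h1 : x₀ - c = ((s/2:ℝ):ℂ) := by rw [hx₀]; ring
      rw [h1, Complex.norm_real, Real.norm_of_nonneg (by positivity)]
      linarith
    · simp only [mem_singleton_iff, hx₀]
      intro h
      have : ((s/2:ℝ):ℂ) = 0 := by linear_combination h
      rw [Complex.ofReal_eq_zero] at this
      linarith
  have key : ∀ v ∈ V, v ∈ connectedComponentIn V x₀ := by
    intro v hv
    set C := connectedComponentIn V v with hC
    have hvC : v ∈ C := mem_connectedComponentIn hv
    have hCV : C ⊆ V := connectedComponentIn_subset _ _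
    have hCo : IsOpen C := hVo.connectedComponentIn
    have hcl : closure C ∩ U ⊆ C ∪ {c} := by
      rintro q ⟨hq1, hq2⟩
      by_contra hq3
      rw [mem_union, mem_singleton_iff] at hq3
      push_neg at hq3
      have hqV : q ∈ V := ⟨hq2, by simpa using hq3.2⟩
      obtain ⟨t, ht, htball⟩ := Metric.isOpen_iff.mp hVo q hqV
      obtain ⟨y, hy1, hy2⟩ : (Metric.ball q t ∩ C).Nonempty := by
        obtain ⟨b, hb, hbd⟩ := Metric.mem_closure_iff.mp hq1 t ht
        exact ⟨b, by rwa [Metric.mem_ball, dist_comm], hb⟩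
      have hsub : Metric.ball q t ⊆ C := by
        have h1 : IsPreconnected (Metric.ball q t) := (convex_ball q t).isPreconnected
        have h2 := h1.subset_connectedComponentIn hy1 htball
        rw [hC, connectedComponentIn_eq hy2]
        exact h2
      exact hq3.1 (hsub (Metric.mem_ball_self ht))
    have hcc : c ∈ closure C := by
      by_contra hcc
      have hUsub : U ⊆ C ∪ (closure C)ᶜ := by
        intro u hu
        by_cases h1 : u ∈ closure C
        · rcases hcl ⟨h1, hu⟩ with h2 | h2
          · exact Or.inl h2
          · exact absurd (mem_singleton_iff.mp h2 ▸ h1) hcc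
        · exact Or.inr h1
      have h1 := hUc C (closure C)ᶜ hCo isClosed_closure.isOpen_compl hUsub
        ⟨v, hv.1, hvC⟩ ⟨c, hc, hcc⟩
      obtain ⟨w, _, hw1, hw2⟩ := h1
      exact hw2 (subset_closure hw1)
    obtain ⟨y, hyball, hyC⟩ : (Metric.ball c s ∩ C).Nonempty := by
      obtain ⟨b, hb, hbd⟩ := Metric.mem_closure_iff.mp hcc s hs
      exact ⟨b, by rwa [Metric.mem_ball, dist_comm], hb⟩
    have hyPB : y ∈ Metric.ball c s \ {c} := ⟨hyball, (hCV hyC).2⟩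
    have hPBC : Metric.ball c s \ {c} ⊆ C := by
      have h2 := hPB.subset_connectedComponentIn hyPB hPBV
      rw [hC, connectedComponentIn_eq hyC]
      exact h2
    have hx₀C : x₀ ∈ C := hPBC hx₀PB
    have heq := connectedComponentIn_eq (show x₀ ∈ connectedComponentIn V v from hx₀C)
    rw [hC] at hvC
    rw [heq] at hvC
    exact hvC
  have hVeq : V = connectedComponentIn V x₀ :=
    Subset.antisymm (fun v hv => key v hv) (connectedComponentIn_subset _ _)
  show IsPreconnected V
  rw [hVeq]
  exact isPreconnected_connectedComponentIn





lemma isPreconnected_pushout {U : Set ℂ} (hUo : IsOpen U) (hUc : IsPreconnected U)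
    {r₂ : ℝ} (hr₂ : 0 < r₂) (hsph : ∀ z : ℂ, ‖z‖ = r₂ → z ∈ U) :
    IsPreconnected (U ∩ {z : ℂ | r₂ ≤ ‖z‖}) := by
  set ρ : ℂ → ℂ := fun z => ((max r₂ ‖z‖ / ‖z‖ : ℝ) : ℂ) * z with hρdef
  have hρ : ∀ z, ρ z = ((max r₂ ‖z‖ / ‖z‖ : ℝ) : ℂ) * z := fun _ => rfl
  have hρcont : ContinuousOn ρ ({(0:ℂ)}ᶜ) := by
    apply ContinuousOn.mul _ continuousOn_id
    apply Complex.continuous_ofReal.comp_continuousOn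
    apply ContinuousOn.div
    · exact (continuous_const.max continuous_norm).continuousOn
    · exact continuous_norm.continuousOn
    · intro z hz
      simpa using (norm_pos_iff.mpr (by simpa using hz)).ne'
  have h1 : IsPreconnected (U \ {0}) := isPreconnected_diff_singleton hUo hUc 0
  have h2 : IsPreconnected (ρ '' (U \ {0})) :=
    h1.image ρ (hρcont.mono (fun z hz => by simpa using hz.2))
  have hnorm : ∀ z : ℂ, z ≠ 0 → ‖ρ z‖ = max r₂ ‖z‖ := by
    intro z hz
    have h3 : (0:ℝ) < ‖z‖ := norm_pos_iff.mpr hz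
    rw [hρ, norm_mul, Complex.norm_real, Real.norm_of_nonneg (by positivity)]
    rw [div_mul_eq_mul_div, mul_div_assoc, div_self h3.ne', mul_one]
  have hfix : ∀ z : ℂ, r₂ ≤ ‖z‖ → ρ z = z := by
    intro z hzn
    have h3 : (0:ℝ) < ‖z‖ := lt_of_lt_of_le hr₂ hzn
    rw [hρ, max_eq_right hzn, div_self h3.ne']
    simp
  have himg : ρ '' (U \ {0}) = U ∩ {z : ℂ | r₂ ≤ ‖z‖} := by
    ext w
    constructor
    · rintro ⟨z, ⟨hzU, hz0⟩, rfl⟩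
      have hz0' : z ≠ 0 := by simpa using hz0
      by_cases hc : r₂ ≤ ‖z‖
      · rw [hfix z hc]
        exact ⟨hzU, hc⟩
      · have hn : ‖ρ z‖ = r₂ := by
          rw [hnorm z hz0', max_eq_left (le_of_not_ge hc)]
        exact ⟨hsph _ hn, by rw [mem_setOf_eq, hn]⟩
    · rintro ⟨hwU, hwn⟩
      have hw0 : w ≠ 0 := by
        intro h
        rw [h] at hwn
        simp at hwn
        linarith
      exact ⟨w, ⟨hwU, by simpa using hw0⟩, hfix w hwn⟩
  rwa [himg] at h2



lemma ap_resolvent_W {K L : Set ℂ} (hK : IsCompact K) (hKne : K.Nonempty)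
    (hKc : IsConnected Kᶜ) {r r₂ R : ℝ} (hr : 0 < r) (hrr₂ : r < r₂)
    (hL : L = Metric.closedBall 0 r ∪ K)
    (hd : ∀ z ∈ K, r₂ < ‖z‖) (hR : ∀ z ∈ L, ‖z‖ ≤ R) :
    ∀ a : ℂ, a ∉ K → r₂ ≤ ‖a‖ → Ap L (fun z => (z - a)⁻¹) := by
  have hKcl : IsClosed K := hK.isClosed
  set W : Set ℂ := Kᶜ ∩ {z : ℂ | r₂ ≤ ‖z‖} with hW
  have hWpre : IsPreconnected W :=
    isPreconnected_pushout hKcl.isOpen_compl hKc.isPreconnected (lt_trans hr hrr₂)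
      (fun z hz => fun hzK => absurd hz (by have := hd z hzK; intro h; linarith))
  -- the "radius" function
  set dd : ℂ → ℝ := fun a => min (r₂ - r) (Metric.infDist a K) with hdd
  have hddpos : ∀ a ∈ W, 0 < dd a := by
    rintro a ⟨haK, _⟩
    refine lt_min (by linarith) ?_
    rcases lt_or_eq_of_le (Metric.infDist_nonneg (x := a) (s := K)) with h | h
    · exact h
    · exact absurd ((hKcl.mem_iff_infDist_zero hKne).mpr h.symm) haK
  have hddsep : ∀ a ∈ W, ∀ z ∈ L, dd a ≤ ‖z - a‖ := by
    rintro a ⟨haK, han⟩ z hz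
    rw [hL] at hz
    rcases hz with hz | hz
    · have h1 : ‖z‖ ≤ r := by simpa [Metric.mem_closedBall, dist_eq_norm] using hz
      have h2 : ‖a‖ - ‖z‖ ≤ ‖z - a‖ := by
        have := norm_sub_norm_le a z
        rw [norm_sub_rev] at this
        linarith
      have h3 : r₂ ≤ ‖a‖ := han
      calc dd a ≤ r₂ - r := min_le_left _ _
        _ ≤ ‖z - a‖ := by linarith
    · calc dd a ≤ Metric.infDist a K := min_le_right _ _
        _ ≤ dist a z := Metric.infDist_le_dist_of_mem hz
        _ = ‖z - a‖ := by rw [dist_eq_norm, norm_sub_rev]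
  -- pushing within W
  have hpush : ∀ a ∈ W, ∀ b ∈ W, dist b a ≤ (dd a)/2 →
      Ap L (fun z => (z - a)⁻¹) → Ap L (fun z => (z - b)⁻¹) := by
    intro a ha b hb hdist hAp
    exact ap_resolvent_push (hddpos a ha) (hddsep a ha)
      (by rwa [← dist_eq_norm]) hAp
  -- membership set
  set G : Set ℂ := {a : ℂ | a ∈ W ∧ Ap L (fun z => (z - a)⁻¹)} with hG
  -- base point
  set R' : ℝ := max R r₂ with hR'
  have hR'0 : 0 ≤ R' := le_trans (le_of_lt (lt_trans hr hrr₂)) (le_max_right _ _)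
  set T : ℂ := ((2*R' + 1 : ℝ) : ℂ) with hT
  have hTnorm : ‖T‖ = 2*R' + 1 := by
    rw [hT, Complex.norm_real, Real.norm_of_nonneg (by linarith)]
  have hTW : T ∈ W := by
    constructor
    · intro hTK
      have h1 : ‖T‖ ≤ R := hR T (by rw [hL]; exact Or.inr hTK)
      rw [hTnorm] at h1
      have : R ≤ R' := le_max_left _ _
      linarith
    · rw [mem_setOf_eq, hTnorm]
      have : r₂ ≤ R' := le_max_right _ _
      linarith
  have hTG : T ∈ G := by
    refine ⟨hTW, ap_resolvent_far hR'0 (fun z hz => le_trans (hR z hz) (le_max_left _ _)) ?_⟩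
    rw [hTnorm]
  -- main clopen argument
  intro a₀ ha₀K ha₀n
  by_contra hbad
  have ha₀W : a₀ ∈ W := ⟨ha₀K, ha₀n⟩
  -- open covers
  set u : Set ℂ := ⋃ (a : ℂ) (_ : a ∈ G), Metric.ball a ((dd a)/4) with hu
  set v : Set ℂ := ⋃ (a : ℂ) (_ : a ∈ W \ G), Metric.ball a ((dd a)/4) with hv
  have huo : IsOpen u := isOpen_iUnion (fun a => isOpen_iUnion (fun _ => Metric.isOpen_ball))
  have hvo : IsOpen v := isOpen_iUnion (fun a => isOpen_iUnion (fun _ => Metric.isOpen_ball))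
  have hcover : W ⊆ u ∪ v := by
    intro w hw
    by_cases hwG : w ∈ G
    · exact Or.inl (mem_iUnion.mpr ⟨w, mem_iUnion.mpr ⟨hwG,
        Metric.mem_ball_self (by have := hddpos w hw; positivity)⟩⟩)
    · exact Or.inr (mem_iUnion.mpr ⟨w, mem_iUnion.mpr ⟨⟨hw, hwG⟩,
        Metric.mem_ball_self (by have := hddpos w hw; positivity)⟩⟩)
  have hWu : (W ∩ u).Nonempty := by
    refine ⟨T, hTW, mem_iUnion.mpr ⟨T, mem_iUnion.mpr ⟨hTG,
      Metric.mem_ball_self (by have := hddpos T hTW; positivity)⟩⟩⟩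
  have hWv : (W ∩ v).Nonempty := by
    refine ⟨a₀, ha₀W, mem_iUnion.mpr ⟨a₀, mem_iUnion.mpr ⟨⟨ha₀W, fun hG' => hbad hG'.2⟩,
      Metric.mem_ball_self (by have := hddpos a₀ ha₀W; positivity)⟩⟩⟩
  obtain ⟨w, hwW, hwu, hwv⟩ := hWpre u v huo hvo hcover hWu hWv
  obtain ⟨a, haG, hwa⟩ : ∃ a, a ∈ G ∧ w ∈ Metric.ball a ((dd a)/4) := by
    obtain ⟨s, ⟨a, rfl⟩, hs⟩ := hwu
    obtain ⟨s', ⟨haG, rfl⟩, hs'⟩ := hs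
    exact ⟨a, haG, hs'⟩
  obtain ⟨b, hbWG, hwb⟩ : ∃ b, b ∈ W \ G ∧ w ∈ Metric.ball b ((dd b)/4) := by
    obtain ⟨s, ⟨b, rfl⟩, hs⟩ := hwv
    obtain ⟨s', ⟨hbG, rfl⟩, hs'⟩ := hs
    exact ⟨b, hbG, hs'⟩
  -- w ∈ G
  have hwG : Ap L (fun z => (z - w)⁻¹) := by
    apply hpush a haG.1 w hwW _ haG.2
    have h1 := Metric.mem_ball.mp hwa
    have h2 := hddpos a haG.1
    linarith
  -- b ∈ G : contradiction
  apply hbWG.2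
  refine ⟨hbWG.1, ?_⟩
  apply hpush w hwW b hbWG.1 _ hwG
  -- dist b w ≤ dd w / 2
  have h1 : dist w b < dd b / 4 := Metric.mem_ball.mp hwb
  have h2 : dd b - dist b w ≤ dd w := by
    have h3 : Metric.infDist b K ≤ Metric.infDist w K + dist b w :=
      Metric.infDist_le_infDist_add_dist
    have h4 : dd b ≤ r₂ - r := min_le_left _ _
    have h5 : dd b ≤ Metric.infDist b K := min_le_right _ _
    refine le_min (by linarith [dist_nonneg (x := b) (y := w)]) ?_
    have : dist b w = dist w b := dist_comm b w
    linarith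
  have h6 : 0 < dd b := hddpos b hbWG.1
  have h7 : dist b w = dist w b := dist_comm b w
  rw [Metric.mem_ball] at hwb
  linarith


lemma ap_inv_prod {L : Set ℂ} {δ₀ : ℝ} (hδ₀ : 0 < δ₀) :
    ∀ m : Multiset ℂ, (∀ w ∈ m, Ap L (fun z => (z - w)⁻¹) ∧ ∀ z ∈ L, δ₀ ≤ ‖z - w‖) →
    Ap L (fun z => ((m.map (fun w => z - w)).prod)⁻¹) ∧
    (∀ z ∈ L, ‖((m.map (fun w => z - w)).prod)⁻¹‖ ≤ (max 1 δ₀⁻¹)^(Multiset.card m)) := by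
  intro m
  induction m using Multiset.induction_on with
  | empty =>
      intro _
      constructor
      · simpa using Ap.const (L := L) 1
      · intro z _
        simp
  | @cons a s ih =>
      intro hyp
      obtain ⟨ihAp, ihBd⟩ := ih (fun w hw => hyp w (Multiset.mem_cons_of_mem hw))
      obtain ⟨haAp, haBd⟩ := hyp a (Multiset.mem_cons_self a s)
      have hB1 : (1:ℝ) ≤ max 1 δ₀⁻¹ := le_max_left _ _
      have hB0 : (0:ℝ) ≤ max 1 δ₀⁻¹ := by linarith
      have habd : ∀ z ∈ L, ‖(z - a)⁻¹‖ ≤ max 1 δ₀⁻¹ := by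
        intro z hz
        rw [norm_inv]
        exact le_trans (inv_anti₀ hδ₀ (haBd z hz)) (le_max_right _ _)
      have heq : ∀ z : ℂ, (((a ::ₘ s).map (fun w => z - w)).prod)⁻¹
          = (z - a)⁻¹ * ((s.map (fun w => z - w)).prod)⁻¹ := by
        intro z
        rw [Multiset.map_cons, Multiset.prod_cons, mul_inv]
      constructor
      · have hmul := Ap.mul (L := L) hB0 (pow_nonneg hB0 _) haAp ihAp habd ihBd
        intro ε hε
        obtain ⟨p, hp⟩ := hmul ε hε
        refine ⟨p, fun z hz => ?_⟩
        have h1 := hp z hz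
        simp only [heq z]
        simpa using h1
      · intro z hz
        rw [heq z, norm_mul, Multiset.card_cons, pow_succ]
        have h2 := mul_le_mul (habd z hz) (ihBd z hz) (norm_nonneg _) hB0
        calc ‖(z-a)⁻¹‖ * ‖((s.map (fun w => z - w)).prod)⁻¹‖
            ≤ (max 1 δ₀⁻¹) * (max 1 δ₀⁻¹)^(Multiset.card s) := h2
          _ = (max 1 δ₀⁻¹)^(Multiset.card s) * (max 1 δ₀⁻¹) := by ring

lemma pow_div_identity {x y : ℝ} (hy : 0 < y) (n : ℕ) : x^n = y^n * ((x/y)^n) := by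
  rw [div_pow]
  field_simp

lemma inv_half_identity {x y : ℝ} (hy : 0 < y) (n : ℕ) : x^n * (y^n/2)⁻¹ = 2*(x/y)^n := by
  rw [div_pow, inv_div]
  have : y^n ≠ 0 := by positivity
  field_simp

lemma key_approx {K : Set ℂ} (hK : IsCompact K) (hKne : K.Nonempty)
    (hKc : IsConnected Kᶜ) {r : ℝ} (hr : 0 < r)
    (hD : Metric.closedBall (0:ℂ) r ∩ K = ∅) (f : Polynomial ℂ) :
    ∀ ε > (0:ℝ), ∃ Sp : Polynomial ℂ,
      (∀ z ∈ Metric.closedBall (0:ℂ) r, ‖Sp.eval z‖ ≤ ε) ∧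
      (∀ z ∈ K, ‖Sp.eval z - f.eval z‖ ≤ ε) := by
  obtain ⟨z₀, hz₀K, hz₀min⟩ := hK.exists_isMinOn hKne continuous_norm.continuousOn
  set d : ℝ := ‖z₀‖ with hddef
  have hdK : ∀ z ∈ K, d ≤ ‖z‖ := fun z hz => hz₀min hz
  have hrd : r < d := by
    by_contra hcon
    push_neg at hcon
    have h1 : z₀ ∈ Metric.closedBall (0:ℂ) r ∩ K :=
      ⟨by rwa [Metric.mem_closedBall, dist_eq_norm, sub_zero], hz₀K⟩
    rw [hD] at h1
    exact h1
  set r₁ : ℝ := (r + d)/2 with hr₁def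
  set r₂ : ℝ := (3*r + d)/4 with hr₂def
  have hrr₂ : r < r₂ := by rw [hr₂def]; linarith
  have hr₂r₁ : r₂ < r₁ := by rw [hr₂def, hr₁def]; linarith
  have hr₁d : r₁ < d := by rw [hr₁def]; linarith
  have hr₁0 : 0 < r₁ := by rw [hr₁def]; linarith
  have hd0 : 0 < d := lt_trans hr hrd
  set L : Set ℂ := Metric.closedBall (0:ℂ) r ∪ K with hLdef
  obtain ⟨R₀, hR₀⟩ := hK.isBounded.subset_closedBall 0
  set R : ℝ := max R₀ r with hRdef
  have hRL : ∀ z ∈ L, ‖z‖ ≤ R := by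
    intro z hz
    rcases hz with hz | hz
    · rw [Metric.mem_closedBall, dist_eq_norm, sub_zero] at hz
      exact le_trans hz (le_max_right _ _)
    · have h2 := hR₀ hz
      rw [Metric.mem_closedBall, dist_eq_norm, sub_zero] at h2
      exact le_trans h2 (le_max_left _ _)
  have hres : ∀ a : ℂ, ‖a‖ = r₁ → Ap L (fun z => (z - a)⁻¹) := by
    intro a ha
    apply ap_resolvent_W hK hKne hKc hr hrr₂ hLdef
      (fun z hz => lt_of_lt_of_le (by rw [hr₂def]; linarith) (hdK z hz)) hRL
    · intro haK
      have h3 := hdK a haK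
      rw [ha] at h3
      linarith
    · rw [ha]; linarith
  have hLcpt : IsCompact L := (isCompact_closedBall _ _).union hK
  have hLne : L.Nonempty := ⟨z₀, Or.inr hz₀K⟩
  obtain ⟨zf, _, hzf⟩ := hLcpt.exists_isMaxOn hLne
    (continuous_norm.comp f.continuous).continuousOn
  set Mf : ℝ := ‖f.eval zf‖ with hMfdef
  have hMf : ∀ z ∈ L, ‖f.eval z‖ ≤ Mf := fun z hz => hzf hz
  have hMf0 : (0:ℝ) ≤ Mf := norm_nonneg _
  intro ε hε
  set qm : ℝ := max (r/r₁) (r₁/d) with hqmdef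
  have hqm0 : 0 ≤ qm := le_trans (by positivity) (le_max_left _ _)
  have hqm1 : qm < 1 := by
    apply max_lt
    · rw [div_lt_one hr₁0]; rw [hr₁def]; linarith
    · rw [div_lt_one hd0]; exact hr₁d
  set e₂ : ℝ := min (1/2) (ε/(4*(Mf+1))) with he₂def
  have he₂0 : 0 < e₂ := lt_min (by norm_num) (by positivity)
  obtain ⟨n, hqmn⟩ := exists_pow_lt_of_lt_one he₂0 hqm1
  have hqmn2 : qm^n ≤ 1/2 := le_trans hqmn.le (min_le_left _ _)
  have hqmne : qm^n ≤ ε/(4*(Mf+1)) := le_trans hqmn.le (min_le_right _ _)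
  have hqmp : (0:ℝ) ≤ qm^n := pow_nonneg hqm0 n
  have hn0 : n ≠ 0 := by
    intro h
    rw [h, pow_zero] at hqmn2
    norm_num at hqmn2
  set c : ℂ := ((r₁:ℝ):ℂ)^n with hcdef
  have hcnorm : ‖c‖ = r₁^n := by
    rw [hcdef, norm_pow, Complex.norm_real, Real.norm_of_nonneg hr₁0.le]
  set pol : Polynomial ℂ := X^n - C c with hpoldef
  have hmonic : pol.Monic := monic_X_pow_sub_C c hn0
  have hfact : pol = (pol.roots.map (fun a => X - C a)).prod :=
    (IsAlgClosed.splits pol).eq_prod_roots_of_monic hmonic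
  have hrootnorm : ∀ w ∈ pol.roots, ‖w‖ = r₁ := by
    intro w hw
    have h1 : pol.IsRoot w := (Polynomial.mem_roots'.mp hw).2
    have h2 : w^n = c := by
      rw [Polynomial.IsRoot, hpoldef] at h1
      simp only [Polynomial.eval_sub, Polynomial.eval_pow, Polynomial.eval_X,
        Polynomial.eval_C] at h1
      exact sub_eq_zero.mp h1
    have h3 : ‖w‖^n = r₁^n := by
      rw [← norm_pow, h2, hcnorm]
    exact (pow_left_inj₀ (norm_nonneg w) hr₁0.le hn0).mp h3
  have hevalprod : ∀ z : ℂ, z^n - c = ((pol.roots.map (fun w => z - w)).prod) := by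
    intro z
    have h1 : pol.eval z = z^n - c := by simp [hpoldef]
    calc z^n - c = pol.eval z := h1.symm
      _ = ((pol.roots.map (fun a => X - C a)).prod).eval z := by rw [← hfact]
      _ = (pol.roots.map (fun w => z - w)).prod := by
          rw [Polynomial.eval_multiset_prod, Multiset.map_map]
          simp [Function.comp]
  set δ₀ : ℝ := min (r₁ - r) (d - r₁) with hδ₀def
  have hδ₀ : 0 < δ₀ := lt_min (by linarith) (by linarith)
  have hsep : ∀ w : ℂ, ‖w‖ = r₁ → ∀ z ∈ L, δ₀ ≤ ‖z - w‖ := by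
    intro w hw z hz
    rcases hz with hz | hz
    · rw [Metric.mem_closedBall, dist_eq_norm, sub_zero] at hz
      have h4 : ‖w‖ - ‖z‖ ≤ ‖z - w‖ := by
        have h5 := norm_sub_norm_le w z
        rw [norm_sub_rev] at h5
        linarith
      have h6 : δ₀ ≤ r₁ - r := min_le_left _ _
      rw [hw] at h4
      linarith
    · have h4 : ‖z‖ - ‖w‖ ≤ ‖z - w‖ := norm_sub_norm_le z w
      have h5 := hdK z hz
      have h6 : δ₀ ≤ d - r₁ := min_le_right _ _
      rw [hw] at h4
      linarith
  obtain ⟨hApinv, _⟩ := ap_inv_prod hδ₀ pol.roots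
    (fun w hw => ⟨hres w (hrootnorm w hw), hsep w (hrootnorm w hw)⟩)
  have hApG : Ap L (fun z => (z^n - c)⁻¹) := by
    intro ε' hε'
    obtain ⟨p, hp⟩ := hApinv ε' hε'
    refine ⟨p, fun z hz => ?_⟩
    have h1 := hp z hz
    simp only [hevalprod z]
    simpa using h1
  have hApχ : Ap L (fun z => 1 + c * (z^n - c)⁻¹) :=
    Ap.add (Ap.const 1) (Ap.smul c hApG)
  -- denominator bounds
  have hqmr : (r/r₁)^n ≤ qm^n := pow_le_pow_left₀ (by positivity) (le_max_left _ _) n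
  have hqmr₁ : (r₁/d)^n ≤ qm^n := pow_le_pow_left₀ (by positivity) (le_max_right _ _) n
  have hdiskden : ∀ z : ℂ, ‖z‖ ≤ r → r₁^n/2 ≤ ‖z^n - c‖ := by
    intro z hz
    have h1 : ‖z^n‖ ≤ r^n := by
      rw [norm_pow]; exact pow_le_pow_left₀ (norm_nonneg z) hz n
    have h2 : r^n = r₁^n * ((r/r₁)^n) := pow_div_identity hr₁0 n
    have h3 : r^n ≤ r₁^n * qm^n := by
      rw [h2]
      exact mul_le_mul_of_nonneg_left hqmr (by positivity)
    have h4 : r₁^n * qm^n ≤ r₁^n * (1/2) := mul_le_mul_of_nonneg_left hqmn2 (by positivity)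
    have h5 : ‖c‖ - ‖z^n‖ ≤ ‖z^n - c‖ := by
      have h6 := norm_sub_norm_le c (z^n)
      rw [norm_sub_rev] at h6
      linarith
    rw [hcnorm] at h5
    linarith
  have hKden : ∀ z ∈ K, d^n/2 ≤ ‖z^n - c‖ := by
    intro z hz
    have h1 : d^n ≤ ‖z^n‖ := by
      rw [norm_pow]; exact pow_le_pow_left₀ hd0.le (hdK z hz) n
    have h2 : r₁^n = d^n * ((r₁/d)^n) := pow_div_identity hd0 n
    have h3 : r₁^n ≤ d^n * (1/2) := by
      rw [h2]
      calc d^n * ((r₁/d)^n) ≤ d^n * qm^n := mul_le_mul_of_nonneg_left hqmr₁ (by positivity)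
        _ ≤ d^n * (1/2) := mul_le_mul_of_nonneg_left hqmn2 (by positivity)
    have h5 : ‖z^n‖ - ‖c‖ ≤ ‖z^n - c‖ := norm_sub_norm_le _ _
    rw [hcnorm] at h5
    linarith
  have hχdisk : ∀ z : ℂ, ‖z‖ ≤ r → ‖1 + c*(z^n - c)⁻¹‖ ≤ 2*qm^n := by
    intro z hz
    have hden := hdiskden z hz
    have hne : z^n - c ≠ 0 := by
      intro h
      rw [h, norm_zero] at hden
      have : (0:ℝ) < r₁^n/2 := by positivity
      linarith
    have hid : 1 + c*(z^n - c)⁻¹ = z^n * (z^n - c)⁻¹ := by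
      have hinv : (z^n - c) * (z^n - c)⁻¹ = 1 := mul_inv_cancel₀ hne
      linear_combination (-1 : ℂ) * hinv
    rw [hid, norm_mul, norm_inv, norm_pow]
    have h6 : ‖z^n - c‖⁻¹ ≤ (r₁^n/2)⁻¹ := inv_anti₀ (by positivity) hden
    calc ‖z‖^n * ‖z^n - c‖⁻¹ ≤ r^n * (r₁^n/2)⁻¹ :=
          mul_le_mul (pow_le_pow_left₀ (norm_nonneg z) hz n) h6 (by positivity) (by positivity)
      _ = 2 * (r/r₁)^n := inv_half_identity hr₁0 n
      _ ≤ 2*qm^n := by linarith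
  have hχK : ∀ z ∈ K, ‖(1 + c*(z^n - c)⁻¹) - 1‖ ≤ 2*qm^n := by
    intro z hz
    have hden := hKden z hz
    have h7 : (1 + c*(z^n - c)⁻¹) - 1 = c*(z^n-c)⁻¹ := by ring
    rw [h7, norm_mul, norm_inv, hcnorm]
    have h6 : ‖z^n - c‖⁻¹ ≤ (d^n/2)⁻¹ := inv_anti₀ (by positivity) hden
    calc r₁^n * ‖z^n - c‖⁻¹ ≤ r₁^n * (d^n/2)⁻¹ :=
          mul_le_mul_of_nonneg_left h6 (by positivity)
      _ = 2 * (r₁/d)^n := inv_half_identity hd0 n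
      _ ≤ 2*qm^n := by linarith
  have hχbd : ∀ z ∈ L, ‖1 + c*(z^n - c)⁻¹‖ ≤ 2 := by
    intro z hz
    rcases hz with hz | hz
    · rw [Metric.mem_closedBall, dist_eq_norm, sub_zero] at hz
      have := hχdisk z hz
      linarith
    · have h8 := hχK z hz
      calc ‖1 + c*(z^n - c)⁻¹‖ = ‖((1 + c*(z^n - c)⁻¹) - 1) + 1‖ := by ring_nf
        _ ≤ ‖(1 + c*(z^n - c)⁻¹) - 1‖ + ‖(1:ℂ)‖ := norm_add_le _ _
        _ ≤ 2*qm^n + 1 := by rw [norm_one]; linarith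
        _ ≤ 2 := by linarith
  have hApF : Ap L (fun z => f.eval z * (1 + c*(z^n - c)⁻¹)) :=
    Ap.mul hMf0 (by norm_num) (Ap.of_poly f) hApχ hMf hχbd
  obtain ⟨Sp, hSp⟩ := hApF (ε/2) (by positivity)
  have hsmall : Mf * (2*qm^n) ≤ ε/2 := by
    have h3 : Mf * (2*qm^n) ≤ Mf * (2*(ε/(4*(Mf+1)))) :=
      mul_le_mul_of_nonneg_left (by linarith) hMf0
    have h4 : Mf * (2*(ε/(4*(Mf+1)))) = (Mf/(Mf+1)) * (ε/2) := by
      field_simp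
      ring
    have h5 : Mf/(Mf+1) ≤ 1 := by
      rw [div_le_one (by positivity)]
      linarith
    have h6 : (Mf/(Mf+1))*(ε/2) ≤ 1*(ε/2) :=
      mul_le_mul_of_nonneg_right h5 (by positivity)
    linarith
  refine ⟨Sp, ?_, ?_⟩
  · intro z hz
    have hzL : z ∈ L := Or.inl hz
    rw [Metric.mem_closedBall, dist_eq_norm, sub_zero] at hz
    have h1 := hSp z hzL
    simp only at h1
    have h2 : ‖f.eval z * (1 + c*(z^n - c)⁻¹)‖ ≤ Mf * (2*qm^n) := by
      rw [norm_mul]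
      exact mul_le_mul (hMf z hzL) (hχdisk z hz) (norm_nonneg _) hMf0
    calc ‖Sp.eval z‖
        = ‖(Sp.eval z - f.eval z * (1 + c*(z^n - c)⁻¹)) + f.eval z * (1 + c*(z^n - c)⁻¹)‖ := by
          congr 1; ring
      _ ≤ ‖Sp.eval z - f.eval z * (1 + c*(z^n - c)⁻¹)‖ + ‖f.eval z * (1 + c*(z^n - c)⁻¹)‖ :=
          norm_add_le _ _
      _ ≤ ε/2 + ε/2 := add_le_add h1 (le_trans h2 hsmall)
      _ = ε := by ring
  · intro z hz
    have hzL : z ∈ L := Or.inr hz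
    have h1 := hSp z hzL
    simp only at h1
    have h2 : ‖f.eval z * (1 + c*(z^n - c)⁻¹) - f.eval z‖ ≤ Mf * (2*qm^n) := by
      have h3 : f.eval z * (1 + c*(z^n - c)⁻¹) - f.eval z
          = f.eval z * ((1 + c*(z^n - c)⁻¹) - 1) := by ring
      rw [h3, norm_mul]
      exact mul_le_mul (hMf z hzL) (hχK z hz) (norm_nonneg _) hMf0
    calc ‖Sp.eval z - f.eval z‖
        = ‖(Sp.eval z - f.eval z * (1 + c*(z^n - c)⁻¹))
            + (f.eval z * (1 + c*(z^n - c)⁻¹) - f.eval z)‖ := by congr 1; ring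
      _ ≤ ‖Sp.eval z - f.eval z * (1 + c*(z^n - c)⁻¹)‖
            + ‖f.eval z * (1 + c*(z^n - c)⁻¹) - f.eval z‖ := norm_add_le _ _
      _ ≤ ε/2 + ε/2 := add_le_add h1 (le_trans h2 hsmall)
      _ = ε := by ring



lemma coeff_bound {S : Polynomial ℂ} {r M : ℝ} (hr : 0 < r)
    (h : ∀ z : ℂ, ‖z‖ = r → ‖S.eval z‖ ≤ M) (j : ℕ) : ‖S.coeff j‖ * r^j ≤ M := by
  set N : ℕ := max (S.natDegree + 1) (j + 1) with hN
  have hNdeg : S.natDegree < N := lt_of_lt_of_le (Nat.lt_succ_self _) (le_max_left _ _)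
  have hjN : j < N := lt_of_lt_of_le (Nat.lt_succ_self _) (le_max_right _ _)
  have hN0 : N ≠ 0 := by omega
  set ξ : ℂ := Complex.exp (2 * Real.pi * Complex.I / N) with hξ
  have hprim : IsPrimitiveRoot ξ N := Complex.isPrimitiveRoot_exp N hN0
  have hξnorm : ‖ξ‖ = 1 := by
    have h1 : ξ = Complex.exp (((2 * Real.pi / N : ℝ) : ℂ) * Complex.I) := by
      rw [hξ]; congr 1; push_cast; ring
    rw [h1, Complex.norm_exp_ofReal_mul_I]
  have hsum : ∀ t : ℕ, ∑ k ∈ range N, (ξ^t)^k = if N ∣ t then (N:ℂ) else 0 := by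
    intro t
    by_cases hdvd : N ∣ t
    · rw [if_pos hdvd, hprim.pow_eq_one_iff_dvd t |>.mpr hdvd]
      simp
    · rw [if_neg hdvd]
      have hne : ξ^t ≠ 1 := fun hh => hdvd ((hprim.pow_eq_one_iff_dvd t).mp hh)
      rw [geom_sum_eq hne]
      have : (ξ^t)^N = 1 := by
        rw [← pow_mul, mul_comm, pow_mul, hprim.pow_eq_one, one_pow]
      rw [this]
      simp
  have main : (N:ℂ) * (S.coeff j * (r:ℂ)^j) = ∑ k ∈ range N, S.eval ((r:ℂ) * ξ^k) * (ξ^k)^(N - j) := by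
    have heval : ∀ k, S.eval ((r:ℂ)*ξ^k) * (ξ^k)^(N-j)
        = ∑ m ∈ range N, S.coeff m * (r:ℂ)^m * (ξ^(m + (N-j)))^k := by
      intro k
      rw [Polynomial.eval_eq_sum_range' hNdeg, Finset.sum_mul]
      refine Finset.sum_congr rfl fun m hm => ?_
      have hpows : (ξ^k)^m * (ξ^k)^(N-j) = (ξ^(m+(N-j)))^k := by
        rw [← pow_mul, ← pow_mul, ← pow_mul, ← pow_add]
        congr 1
        ring
      rw [mul_pow]
      linear_combination (S.coeff m * (r:ℂ)^m) * hpows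
    rw [Finset.sum_congr rfl (fun k _ => heval k), Finset.sum_comm]
    have hinner : ∀ m, ∑ k ∈ range N, S.coeff m * (r:ℂ)^m * (ξ^(m + (N-j)))^k
        = S.coeff m * (r:ℂ)^m * (if N ∣ (m + (N-j)) then (N:ℂ) else 0) := by
      intro m
      rw [← Finset.mul_sum, hsum]
    rw [Finset.sum_congr rfl (fun m _ => hinner m)]
    rw [Finset.sum_eq_single_of_mem j (Finset.mem_range.mpr hjN)]
    · have : N ∣ (j + (N - j)) := by
        have : j + (N - j) = N := by omega
        rw [this]
      rw [if_pos this]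
      ring
    · intro m hm hmj
      have hmN : m < N := Finset.mem_range.mp hm
      have : ¬ N ∣ (m + (N - j)) := by
        intro hdvd2
        have hveq : m + (N - j) = N := Nat.eq_of_dvd_of_lt_two_mul (by omega) hdvd2 (by omega)
        omega
      rw [if_neg this, mul_zero]
  have hnorm : ‖(N:ℂ) * (S.coeff j * (r:ℂ)^j)‖ = N * (‖S.coeff j‖ * r^j) := by
    rw [norm_mul, norm_mul, norm_pow, Complex.norm_natCast, Complex.norm_real,
      Real.norm_of_nonneg hr.le]
  have hbound : ‖∑ k ∈ range N, S.eval ((r:ℂ) * ξ^k) * (ξ^k)^(N - j)‖ ≤ N * M := by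
    calc ‖∑ k ∈ range N, S.eval ((r:ℂ) * ξ^k) * (ξ^k)^(N - j)‖
        ≤ ∑ k ∈ range N, ‖S.eval ((r:ℂ) * ξ^k) * (ξ^k)^(N - j)‖ := norm_sum_le _ _
      _ ≤ ∑ _k ∈ range N, M := by
          apply Finset.sum_le_sum
          intro k _
          rw [norm_mul, norm_pow, norm_pow, hξnorm, one_pow, one_pow, mul_one]
          apply h
          rw [norm_mul, norm_pow, hξnorm, one_pow, mul_one, Complex.norm_real,
            Real.norm_of_nonneg hr.le]
      _ = N * M := by rw [Finset.sum_const, Finset.card_range, nsmul_eq_mul]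
  have hfin : (N:ℝ) * (‖S.coeff j‖ * r^j) ≤ N * M := by
    rw [← hnorm, main]
    exact hbound
  have hNpos : (0:ℝ) < N := by
    have : 0 < N := Nat.pos_of_ne_zero hN0
    exact_mod_cast this
  exact le_of_mul_le_mul_left hfin hNpos


end Lemma27

open Polynomial in
theorem lemma_2_7 (K : Set ℂ) (hK : IsCompact K) (h0 : (0:ℂ) ∉ K)
    (hKc : IsConnected Kᶜ) (r : ℝ) (hr : 0 < r)
    (hD : Metric.closedBall (0:ℂ) r ∩ K = ∅) (P Q : Polynomial ℂ) :
    ∀ ε > (0:ℝ), ∃ (Pt Pi : Polynomial ℂ) (lam : ℕ), P.natDegree < lam ∧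
      Pt = P + X ^ lam * Pi ∧
      (∀ z ∈ Metric.closedBall (0:ℂ) r, ‖Pt.eval z - P.eval z‖ < ε) ∧
      (∀ z ∈ K, ‖Pt.eval z - Q.eval z‖ < ε) := by
  intro ε hε
  by_cases hKne : K.Nonempty
  swap
  · refine ⟨P, 0, P.natDegree + 1, Nat.lt_succ_self _, by ring, ?_, ?_⟩
    · intro z _
      simp [hε]
    · intro z hz
      exact absurd ⟨z, hz⟩ hKne
  classical
  set lam : ℕ := P.natDegree + 1 with hlam
  obtain ⟨R₀, hR₀⟩ := hK.isBounded.subset_closedBall 0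
  set R : ℝ := max R₀ r with hR
  have hrR : r ≤ R := le_max_right _ _
  have hR0 : 0 < R := lt_of_lt_of_le hr hrR
  have hRK : ∀ z ∈ K, ‖z‖ ≤ R := by
    intro z hz
    have h1 := hR₀ hz
    rw [Metric.mem_closedBall, dist_eq_norm, sub_zero] at h1
    exact le_trans h1 (le_max_left _ _)
  set Mx : ℝ := (max 1 (R/r))^lam with hMx
  have hMx1 : (1:ℝ) ≤ Mx := by
    calc (1:ℝ) = 1^lam := (one_pow lam).symm
      _ ≤ (max 1 (R/r))^lam := pow_le_pow_left₀ (by norm_num) (le_max_left _ _) lam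
  set Cst : ℝ := (lam:ℝ)*Mx + (lam:ℝ) + 2 with hCst
  have hCst2 : (2:ℝ) ≤ Cst := by
    have h1 : (0:ℝ) ≤ (lam:ℝ) := Nat.cast_nonneg _
    nlinarith
  have hCst0 : (0:ℝ) < Cst := by linarith
  set ε₁ : ℝ := ε/(2*Cst) with hε₁
  have hε₁0 : 0 < ε₁ := by positivity
  obtain ⟨S, hSdisk, hSK⟩ := Lemma27.key_approx hK hKne hKc hr hD (Q - P) ε₁ hε₁0
  have hcoeff : ∀ j, ‖S.coeff j‖ * r^j ≤ ε₁ := by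
    intro j
    apply Lemma27.coeff_bound hr _ j
    intro z hz
    apply hSdisk
    rw [Metric.mem_closedBall, dist_eq_norm, sub_zero, hz]
  have hmonic : (X^lam : Polynomial ℂ).Monic := monic_X_pow lam
  set Pi : Polynomial ℂ := S /ₘ (X^lam) with hPi
  set Sl : Polynomial ℂ := S %ₘ (X^lam) with hSl
  have hdecomp : Sl + X^lam * Pi = S := Polynomial.modByMonic_add_div S (X^lam)
  have hSl_deg : Sl.natDegree < lam := by
    by_cases h1 : Sl = 0
    · rw [h1]
      simp [hlam]
    · have h2 := Polynomial.degree_modByMonic_lt S hmonic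
      rw [Polynomial.degree_X_pow] at h2
      exact Polynomial.natDegree_lt_iff_degree_lt h1 |>.mpr h2
  have hSl_coeff : ∀ j, j < lam → Sl.coeff j = S.coeff j := by
    intro j hj
    have h1 := congrArg (fun p => Polynomial.coeff p j) hdecomp
    simp only [Polynomial.coeff_add] at h1
    have h2 : (X^lam * Pi).coeff j = 0 := by
      rw [mul_comm, Polynomial.coeff_mul_X_pow', if_neg (not_le.mpr hj)]
    rw [h2, add_zero] at h1
    exact h1
  -- evaluation bounds for the low part Sl
  have hSl_evalr : ∀ z : ℂ, ‖z‖ ≤ r → ‖Sl.eval z‖ ≤ (lam:ℝ) * ε₁ := by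
    intro z hz
    rw [Polynomial.eval_eq_sum_range' hSl_deg]
    calc ‖∑ j ∈ Finset.range lam, Sl.coeff j * z^j‖
        ≤ ∑ j ∈ Finset.range lam, ‖Sl.coeff j * z^j‖ := norm_sum_le _ _
      _ ≤ ∑ _j ∈ Finset.range lam, ε₁ := by
          apply Finset.sum_le_sum
          intro j hj
          rw [norm_mul, norm_pow, hSl_coeff j (Finset.mem_range.mp hj)]
          calc ‖S.coeff j‖ * ‖z‖^j ≤ ‖S.coeff j‖ * r^j := by
                apply mul_le_mul_of_nonneg_left _ (norm_nonneg _)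
                exact pow_le_pow_left₀ (norm_nonneg z) hz j
            _ ≤ ε₁ := hcoeff j
      _ = (lam:ℝ) * ε₁ := by rw [Finset.sum_const, Finset.card_range, nsmul_eq_mul]
  have hSl_evalR : ∀ z : ℂ, ‖z‖ ≤ R → ‖Sl.eval z‖ ≤ (lam:ℝ) * (ε₁ * Mx) := by
    intro z hz
    rw [Polynomial.eval_eq_sum_range' hSl_deg]
    calc ‖∑ j ∈ Finset.range lam, Sl.coeff j * z^j‖
        ≤ ∑ j ∈ Finset.range lam, ‖Sl.coeff j * z^j‖ := norm_sum_le _ _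
      _ ≤ ∑ _j ∈ Finset.range lam, ε₁ * Mx := by
          apply Finset.sum_le_sum
          intro j hj
          have hjlam : j < lam := Finset.mem_range.mp hj
          rw [norm_mul, norm_pow, hSl_coeff j hjlam]
          have h3 : ‖S.coeff j‖ * ‖z‖^j ≤ ‖S.coeff j‖ * R^j := by
            apply mul_le_mul_of_nonneg_left _ (norm_nonneg _)
            exact pow_le_pow_left₀ (norm_nonneg z) hz j
          have h4 : R^j = r^j * ((R/r)^j) := Lemma27.pow_div_identity hr j
          have h5 : ‖S.coeff j‖ * R^j = (‖S.coeff j‖ * r^j) * ((R/r)^j) := by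
            rw [h4]; ring
          have h6 : ((R/r):ℝ)^j ≤ Mx := by
            calc ((R/r):ℝ)^j ≤ (max 1 (R/r))^j :=
                  pow_le_pow_left₀ (by positivity) (le_max_right _ _) j
              _ ≤ (max 1 (R/r))^lam :=
                  pow_le_pow_right₀ (le_max_left _ _) hjlam.le
          have h7 : (‖S.coeff j‖ * r^j) * ((R/r)^j) ≤ ε₁ * Mx := by
            apply mul_le_mul (hcoeff j) h6 (by positivity) hε₁0.le
          have h8 : ‖S.coeff j‖ * R^j ≤ ε₁ * Mx := by
            rw [h5]; exact h7
          exact le_trans h3 h8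
      _ = (lam:ℝ) * (ε₁ * Mx) := by rw [Finset.sum_const, Finset.card_range, nsmul_eq_mul]
  have hεhalf : ε₁ * Cst = ε/2 := by
    rw [hε₁]
    field_simp
  refine ⟨P + X^lam * Pi, Pi, lam, Nat.lt_succ_self _, rfl, ?_, ?_⟩
  · intro z hz
    rw [Metric.mem_closedBall, dist_eq_norm, sub_zero] at hz
    have hzL : z ∈ Metric.closedBall (0:ℂ) r := by
      rw [Metric.mem_closedBall, dist_eq_norm, sub_zero]; exact hz
    have hev := congrArg (Polynomial.eval z) hdecomp
    simp only [Polynomial.eval_add, Polynomial.eval_mul, Polynomial.eval_pow,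
      Polynomial.eval_X] at hev
    have hexp : (P + X^lam * Pi).eval z - P.eval z = S.eval z - Sl.eval z := by
      simp only [Polynomial.eval_add, Polynomial.eval_mul, Polynomial.eval_pow,
        Polynomial.eval_X]
      linear_combination hev
    rw [hexp]
    calc ‖S.eval z - Sl.eval z‖ ≤ ‖S.eval z‖ + ‖Sl.eval z‖ := norm_sub_le _ _
      _ ≤ ε₁ + (lam:ℝ) * ε₁ := add_le_add (hSdisk z hzL) (hSl_evalr z hz)
      _ ≤ ε₁ * Cst := by
          have h2 : ε₁*Cst = (lam:ℝ)*Mx*ε₁ + (lam:ℝ)*ε₁ + 2*ε₁ := by rw [hCst]; ring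
          have h3 : (0:ℝ) ≤ (lam:ℝ)*Mx*ε₁ := by positivity
          linarith
      _ = ε/2 := hεhalf
      _ < ε := by linarith
  · intro z hz
    have hzL : z ∈ Metric.closedBall (0:ℂ) r ∪ K := Or.inr hz
    have hev := congrArg (Polynomial.eval z) hdecomp
    simp only [Polynomial.eval_add, Polynomial.eval_mul, Polynomial.eval_pow,
      Polynomial.eval_X] at hev
    have hexp : (P + X^lam * Pi).eval z - Q.eval z
        = (S.eval z - (Q - P).eval z) - Sl.eval z := by
      simp only [Polynomial.eval_add, Polynomial.eval_mul, Polynomial.eval_pow,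
        Polynomial.eval_X, Polynomial.eval_sub]
      linear_combination hev
    rw [hexp]
    calc ‖(S.eval z - (Q - P).eval z) - Sl.eval z‖
        ≤ ‖S.eval z - (Q - P).eval z‖ + ‖Sl.eval z‖ := norm_sub_le _ _
      _ ≤ ε₁ + (lam:ℝ) * (ε₁ * Mx) := add_le_add (hSK z hz) (hSl_evalR z (hRK z hz))
      _ ≤ ε₁ * Cst := by
          have h2 : ε₁*Cst = (lam:ℝ)*(ε₁*Mx) + (lam:ℝ)*ε₁ + 2*ε₁ := by rw [hCst]; ring
          have h3 : (0:ℝ) ≤ (lam:ℝ)*ε₁ := by positivity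
          linarith
      _ = ε/2 := hεhalf
      _ < ε := by linarith
end

section
/- Let Ω be a domain (open connected subset) of ℂ. There exists a sequence (K_m)_{m≥1} of compact subsets of ℂ with K_m ∩ Ω = ∅ and K_m^c connected, such that every compact set K ⊂ ℂ with K ∩ Ω = ∅ and K^c connected is contained in some K_m. -/
open Metric Set

noncomputable section
namespace Lemma52

def cc (q : ℚ × ℚ) : ℂ := ⟨(q.1 : ℝ), (q.2 : ℝ)⟩

lemma cc_dense (z : ℂ) {δ : ℝ} (hδ : 0 < δ) : ∃ q : ℚ × ℚ, dist (cc q) z < δ := by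
  obtain ⟨a, ha⟩ := exists_rat_near z.re (by positivity : (0:ℝ) < δ/2)
  obtain ⟨b, hb⟩ := exists_rat_near z.im (by positivity : (0:ℝ) < δ/2)
  refine ⟨(a, b), ?_⟩
  have h1 : dist (cc (a,b)) z ≤ |(a:ℝ) - z.re| + |(b:ℝ) - z.im| := by
    rw [Complex.dist_eq]
    simpa [cc] using Complex.norm_le_abs_re_add_abs_im (cc (a,b) - z)
  rw [abs_sub_comm ((a:ℝ)) z.re] at h1
  rw [abs_sub_comm ((b:ℝ)) z.im] at h1
  linarith

def chainSet (ε : ℝ) (l : List ℂ) : Set ℂ := ⋃ q ∈ l, ball q ε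

lemma chainSet_cons (ε : ℝ) (x : ℂ) (l : List ℂ) :
    chainSet ε (x :: l) = ball x ε ∪ chainSet ε l := by
  ext z; simp [chainSet]

lemma mem_chainSet_of_mem {ε : ℝ} (hε : 0 < ε) {q : ℂ} {l : List ℂ} (hq : q ∈ l) :
    q ∈ chainSet ε l :=
  Set.mem_biUnion hq (mem_ball_self hε)

lemma isOpen_chainSet (ε : ℝ) (l : List ℂ) : IsOpen (chainSet ε l) :=
  isOpen_biUnion fun _ _ => isOpen_ball

lemma chainSet_preconn {ε : ℝ} (hε : 0 < ε) :
    ∀ l : List ℂ, List.Chain' (fun a b => dist a b < ε) l → IsPreconnected (chainSet ε l)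
  | [], _ => by simp only [chainSet]; simpa using isPreconnected_empty
  | [x], _ => by
      have : chainSet ε [x] = ball x ε := by simp [chainSet]
      rw [this]; exact (convex_ball x ε).isPreconnected
  | x :: y :: l, h => by
      rw [chainSet_cons]
      have h1 : dist x y < ε := (List.isChain_cons_cons.mp h).1
      have h2 := chainSet_preconn hε (y :: l) (List.isChain_cons_cons.mp h).2
      exact IsPreconnected.union y (by simpa [mem_ball, dist_comm] using h1)
        (mem_chainSet_of_mem hε List.mem_cons_self)
        (convex_ball x ε).isPreconnected h2

lemma preconn_compl_closedBall (r : ℝ) (hr : 0 ≤ r) :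
    IsPreconnected ((closedBall (0:ℂ) r)ᶜ) := by
  have hs : IsPreconnected ((sphere (0:ℂ) 1) ×ˢ (Ioi r)) :=
    ((isConnected_sphere (by rw [Complex.rank_real_complex]; norm_num) 0
      zero_le_one).isPreconnected).prod isPreconnected_Ioi
  have himg := hs.image (fun p : ℂ × ℝ => p.2 • p.1)
    (Continuous.continuousOn (by continuity))
  convert himg using 1
  ext z
  simp only [mem_compl_iff, mem_closedBall, dist_zero_right, not_le, mem_image, mem_prod,
    mem_sphere_iff_norm, sub_zero, mem_Ioi]
  constructor
  · intro hz
    have hz0 : z ≠ 0 := by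
      intro h; rw [h, norm_zero] at hz; linarith
    refine ⟨(‖z‖⁻¹ • z, ‖z‖), ⟨?_, hz⟩, ?_⟩
    · rw [norm_smul, norm_inv, norm_norm, inv_mul_cancel₀ (norm_ne_zero_iff.mpr hz0)]
    · simp only []
      rw [smul_smul, mul_inv_cancel₀ (norm_ne_zero_iff.mpr hz0), one_smul]
  · rintro ⟨⟨v, t⟩, ⟨hv, ht⟩, rfl⟩
    simp only []
    rw [norm_smul, hv, mul_one, Real.norm_eq_abs, abs_of_nonneg (le_trans hr (le_of_lt ht))]
    exact ht

abbrev Datum := ℕ × (ℚ × ℚ) × List (ℚ × ℚ) × ℚ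

def Datum.pts (d : Datum) : List ℂ := (d.2.1 :: d.2.2.1).map cc
def Datum.eps (d : Datum) : ℝ := (d.2.2.2 : ℝ)

lemma Datum.pts_ne (d : Datum) : d.pts ≠ [] := by simp [Datum.pts]

def GoodData (Ω : Set ℂ) (d : Datum) : Prop :=
  0 < d.eps ∧
  List.Chain' (fun a b => dist a b < d.eps) d.pts ∧
  (ball (cc d.2.1) d.eps ∩ Ω).Nonempty ∧
  (d.1 : ℝ) < ‖d.pts.getLast d.pts_ne‖

open Classical in
def FSet (Ω : Set ℂ) (d : Datum) : Set ℂ :=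
  if GoodData Ω d then closedBall 0 (d.1 : ℝ) \ (Ω ∪ chainSet d.eps d.pts) else ∅

lemma FSet_spec (Ω : Set ℂ) (hΩo : IsOpen Ω) (hΩc : IsConnected Ω) (d : Datum) :
    IsCompact (FSet Ω d) ∧ FSet Ω d ∩ Ω = ∅ ∧ IsConnected (FSet Ω d)ᶜ := by
  classical
  rw [FSet]
  split_ifs with hg
  · obtain ⟨hε, hch, ⟨w, hwb, hwΩ⟩, hlast⟩ := hg
    set N := chainSet d.eps d.pts with hN
    have hNopen : IsOpen N := isOpen_chainSet _ _
    have hNpre : IsPreconnected N := chainSet_preconn hε _ hch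
    have hhd : cc d.2.1 ∈ d.pts := by simp [Datum.pts]
    have hwN : w ∈ N := Set.mem_biUnion hhd hwb
    set p := d.pts.getLast d.pts_ne with hp
    have hpN : p ∈ N := mem_chainSet_of_mem hε (List.getLast_mem _)
    have hpout : p ∈ (closedBall (0:ℂ) (d.1:ℝ))ᶜ := by
      simp only [mem_compl_iff, mem_closedBall, dist_zero_right, not_le]
      exact hlast
    refine ⟨(isCompact_closedBall _ _).diff (hΩo.union hNopen), ?_, ?_⟩
    · rw [Set.eq_empty_iff_forall_notMem]
      rintro z ⟨⟨-, hz2⟩, hz3⟩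
      exact hz2 (Or.inl hz3)
    · have hcompl : (closedBall 0 (d.1:ℝ) \ (Ω ∪ N))ᶜ
          = (closedBall (0:ℂ) (d.1:ℝ))ᶜ ∪ (Ω ∪ N) := by
        rw [Set.diff_eq, Set.compl_inter, compl_compl]
      rw [hcompl]
      refine ⟨⟨p, Or.inl hpout⟩, ?_⟩
      have h1 : IsPreconnected (Ω ∪ N) :=
        IsPreconnected.union w hwΩ hwN hΩc.isPreconnected hNpre
      exact IsPreconnected.union p hpout (Or.inr hpN)
        (preconn_compl_closedBall _ (Nat.cast_nonneg _)) h1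
  · refine ⟨isCompact_empty, by simp, ?_⟩
    rw [Set.compl_empty]
    exact isConnected_univ

end Lemma52
end

open Lemma52 in
theorem lemma_5_2 (Ω : Set ℂ) (hΩo : IsOpen Ω) (hΩc : IsConnected Ω) :
    ∃ K : ℕ → Set ℂ,
      (∀ m, IsCompact (K m) ∧ K m ∩ Ω = ∅ ∧ IsConnected (K m)ᶜ) ∧
      ∀ L : Set ℂ, IsCompact L → L ∩ Ω = ∅ → IsConnected Lᶜ → ∃ m, L ⊆ K m := by
  classical
  refine ⟨fun n => ((Encodable.decode n : Option Datum)).elim ∅ (FSet Ω), ?_, ?_⟩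
  · intro n
    cases h : (Encodable.decode n : Option Datum) with
    | none =>
        simp only [h, Option.elim]
        exact ⟨isCompact_empty, by simp, by rw [Set.compl_empty]; exact isConnected_univ⟩
    | some d =>
        simp only [h, Option.elim]
        exact FSet_spec Ω hΩo hΩc d
  · intro L hL hLΩ hLc
    have hΩsub : Ω ⊆ Lᶜ := by
      intro z hz hzL
      rw [Set.eq_empty_iff_forall_notMem] at hLΩ
      exact hLΩ z ⟨hzL, hz⟩
    obtain ⟨r, hr⟩ := hL.isBounded.subset_closedBall 0
    set m : ℕ := ⌈r⌉₊ with hm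
    have hLm : L ⊆ closedBall 0 (m:ℝ) :=
      hr.trans (closedBall_subset_closedBall (Nat.le_ceil r))
    obtain ⟨w, hw⟩ := hΩc.nonempty
    have hwL : w ∈ Lᶜ := hΩsub hw
    set v : ℂ := ((m + 2 : ℕ) : ℂ) with hv
    have hv_norm : ‖v‖ = (m:ℝ) + 2 := by
      rw [hv, Complex.norm_natCast]
      push_cast
      ring
    have hvL : v ∈ Lᶜ := by
      intro hvel
      have := hLm hvel
      rw [mem_closedBall, dist_zero_right, hv_norm] at this
      linarith
    have hLcopen : IsOpen Lᶜ := hL.isClosed.isOpen_compl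
    obtain ⟨γ, hγ⟩ := ((hLcopen.isConnected_iff_isPathConnected).mp hLc).joinedIn w hwL v hvL
    have hC : IsCompact (range γ) := isCompact_range γ.continuous
    have hCsub : range γ ⊆ Lᶜ := range_subset_iff.mpr hγ
    obtain ⟨δ, hδ0, hδ⟩ := hC.exists_thickening_subset_open hLcopen hCsub
    obtain ⟨ε, hε0, hεlt⟩ :=
      exists_rat_btwn (show (0:ℝ) < min (δ/2) 1 from lt_min (by linarith) one_pos)
    have hε0' : 0 < (ε:ℝ) := hε0
    have hεδ : (ε:ℝ) < δ/2 := lt_of_lt_of_le hεlt (min_le_left _ _)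
    have hε1 : (ε:ℝ) < 1 := lt_of_lt_of_le hεlt (min_le_right _ _)
    have hucont := CompactSpace.uniformContinuous_of_continuous γ.continuous
    obtain ⟨δ', hδ'0, hδ'⟩ := Metric.uniformContinuous_iff.mp hucont ((ε:ℝ)/4) (by positivity)
    obtain ⟨k0, hk0⟩ := exists_nat_one_div_lt hδ'0
    set k : ℕ := k0 + 1 with hk
    have hkpos : (0:ℝ) < (k:ℝ) := by positivity
    set t : Fin (k+1) → unitInterval := fun i =>
      ⟨(i:ℝ) / k, ⟨by positivity, by
        rw [div_le_one hkpos]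
        exact_mod_cast Nat.lt_succ_iff.mp i.isLt⟩⟩ with ht
    choose q hq using fun i : Fin (k+1) => cc_dense (γ (t i)) (show 0 < (ε:ℝ)/4 by positivity)
    set d : Datum := (m, q 0, List.ofFn (fun i : Fin k => q i.succ), ε) with hd
    have hpts : d.pts = (List.ofFn q).map cc := by
      rw [Datum.pts]
      congr 1
      exact (List.ofFn_succ (f := q)).symm
    have heps : d.eps = (ε:ℝ) := rfl
    have ht0 : t 0 = 0 := by
      apply Subtype.ext
      simp [ht]
    have htlast : t (Fin.last k) = 1 := by
      apply Subtype.ext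
      simp [t, div_self (ne_of_gt hkpos)]
    have hγ0 : γ (t 0) = w := by rw [ht0]; exact γ.source
    have hγ1 : γ (t (Fin.last k)) = v := by rw [htlast]; exact γ.target
    -- consecutive times are close
    have hstep : ∀ i : ℕ, ∀ h1 : i < k, ∀ h2 : i + 1 < k + 1,
        dist (t ⟨i, Nat.lt_succ_of_lt h1⟩) (t ⟨i+1, h2⟩) < δ' := by
      intro i h1 h2
      rw [Subtype.dist_eq, Real.dist_eq]
      simp only [ht, Fin.val_mk]
      have hkk : (1:ℝ)/k = 1/((k0:ℝ)+1) := by rw [hk]; push_cast; ring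
      have habs : |((i:ℕ):ℝ)/(k:ℝ) - (((i+1:ℕ)):ℝ)/(k:ℝ)| = 1/(k:ℝ) := by
        push_cast
        rw [hk]; push_cast
        rw [show ((i:ℝ))/((k0:ℝ)+1) - ((i:ℝ)+1)/((k0:ℝ)+1) = -(1/((k0:ℝ)+1)) from by ring,
          abs_neg, abs_of_nonneg (by positivity)]
      linarith [habs, hkk, hk0]
    have hgood : GoodData Ω d := by
      refine ⟨by rw [heps]; exact hε0', ?_, ?_, ?_⟩
      · rw [hpts, heps, List.Chain', List.isChain_map, List.isChain_iff_getElem]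
        intro i hi
        simp only [List.length_ofFn] at hi
        have h1 : i < k := by omega
        have h2 : i + 1 < k + 1 := by omega
        simp only [List.getElem_ofFn]
        have e1 : (Fin.cast (List.length_ofFn (f := q)) ⟨i, by simp [List.length_ofFn]; omega⟩ : Fin (k+1))
            = ⟨i, Nat.lt_succ_of_lt h1⟩ := by ext; simp
        have key : dist (cc (q ⟨i, Nat.lt_succ_of_lt h1⟩)) (cc (q ⟨i+1, h2⟩)) < (ε:ℝ) := by
          have d1 := hq ⟨i, Nat.lt_succ_of_lt h1⟩
          have d2 := hq ⟨i+1, h2⟩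
          have d3 := hδ' (hstep i h1 h2)
          calc dist (cc (q ⟨i, Nat.lt_succ_of_lt h1⟩)) (cc (q ⟨i+1, h2⟩))
              ≤ dist (cc (q ⟨i, Nat.lt_succ_of_lt h1⟩)) (γ (t ⟨i, Nat.lt_succ_of_lt h1⟩))
                + dist (γ (t ⟨i, Nat.lt_succ_of_lt h1⟩)) (γ (t ⟨i+1, h2⟩))
                + dist (γ (t ⟨i+1, h2⟩)) (cc (q ⟨i+1, h2⟩)) := dist_triangle4 _ _ _ _
            _ < (ε:ℝ)/4 + (ε:ℝ)/4 + (ε:ℝ)/4 := by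
                have := (hq ⟨i+1, h2⟩)
                rw [dist_comm (γ (t ⟨i+1, h2⟩))]
                exact add_lt_add (add_lt_add d1 d3) this
            _ < (ε:ℝ) := by linarith
        convert key using 3 <;> ext <;> simp
      · refine ⟨w, ?_, hw⟩
        rw [mem_ball]
        have : dist (cc (q 0)) (γ (t 0)) < (ε:ℝ)/4 := hq 0
        rw [hγ0] at this
        rw [dist_comm, heps]
        show dist (cc (q 0)) w < (ε:ℝ)
        calc dist (cc (q 0)) w < (ε:ℝ)/4 := this
          _ < (ε:ℝ) := by linarith
      · have hlast_eq : d.pts.getLast d.pts_ne = cc (q (Fin.last k)) := by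
          simp only [List.getLast_eq_getElem, hpts, List.getElem_map, List.getElem_ofFn,
            List.length_map, List.length_ofFn]
          congr 1
        rw [hlast_eq]
        have d1 : dist (cc (q (Fin.last k))) v < (ε:ℝ)/4 := by
          have := hq (Fin.last k); rwa [hγ1] at this
        have : ‖v‖ - ‖cc (q (Fin.last k))‖ ≤ dist (cc (q (Fin.last k))) v := by
          rw [dist_eq_norm, norm_sub_rev]
          exact norm_sub_norm_le _ _
        rw [hv_norm] at this
        have hm' : (d.1 : ℝ) = (m:ℝ) := rfl
        rw [hm']
        linarith
    refine ⟨Encodable.encode d, ?_⟩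
    show L ⊆ ((Encodable.decode (Encodable.encode d) : Option Datum)).elim ∅ (FSet Ω)
    rw [Encodable.encodek]
    simp only [Option.elim]
    rw [FSet, if_pos hgood]
    intro z hz
    refine ⟨hLm hz, ?_⟩
    rintro (hzΩ | hzN)
    · rw [Set.eq_empty_iff_forall_notMem] at hLΩ
      exact hLΩ z ⟨hz, hzΩ⟩
    · -- z in chain set: contradiction with z ∈ L
      rw [chainSet, Set.mem_iUnion₂] at hzN
      obtain ⟨p, hp, hzp⟩ := hzN
      rw [hpts] at hp
      rw [List.mem_map] at hp
      obtain ⟨a, ha, rfl⟩ := hp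
      rw [List.mem_ofFn] at ha
      obtain ⟨i, rfl⟩ := ha
      have hzthick : z ∈ thickening δ (range γ) := by
        rw [Metric.mem_thickening_iff]
        refine ⟨γ (t i), mem_range_self _, ?_⟩
        calc dist z (γ (t i)) ≤ dist z (cc (q i)) + dist (cc (q i)) (γ (t i)) :=
              dist_triangle _ _ _
          _ < d.eps + (ε:ℝ)/4 := add_lt_add (mem_ball.mp hzp) (hq i)
          _ = (ε:ℝ) + (ε:ℝ)/4 := by rw [heps]
          _ < δ := by linarith
      exact hδ hzthick hz
end

section
/- Let Ω ⊂ ℂ be a simply connected domain containing 0. There exists a sequence (K̃_m)_{m≥1} of compact subsets of ℂ \ Ω, each with complement having finitely many connected components and with 0 in the unbounded component of the complement, such that: for every compact K ⊂ ℂ \ Ω whose complement has finitely many components with 0 in the unbounded component, there exists m with (i) K ⊂ K̃_m, and (ii) every component of K^c contains a component of K̃_m^c. -/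
open Metric Set

/-- The set of connected components of a subset `S` of ℂ. -/
def setComponents (S : Set ℂ) : Set (Set ℂ) :=
  {C | ∃ x ∈ S, C = connectedComponentIn S x}

namespace L59

def qc (q : ℚ × ℚ) : ℂ := ⟨(q.1 : ℝ), (q.2 : ℝ)⟩

def qball (b : (ℚ × ℚ) × ℚ) : Set ℂ := ball (qc b.1) (b.2 : ℝ)

lemma qc_dense (z : ℂ) {ε : ℝ} (hε : 0 < ε) : ∃ q : ℚ × ℚ, dist (qc q) z < ε := by
  obtain ⟨a, ha⟩ := exists_rat_near z.re (half_pos hε)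
  obtain ⟨b, hb⟩ := exists_rat_near z.im (half_pos hε)
  refine ⟨(a, b), ?_⟩
  rw [Complex.dist_eq]
  calc ‖qc (a, b) - z‖ ≤ |(qc (a, b) - z).re| + |(qc (a, b) - z).im| :=
        Complex.norm_le_abs_re_add_abs_im _
    _ < ε := by
        rw [abs_sub_comm z.re] at ha; rw [abs_sub_comm z.im] at hb
        simp only [qc, Complex.sub_re, Complex.sub_im] at *
        linarith

lemma exists_qball {U : Set ℂ} (hU : IsOpen U) {x : ℂ} (hx : x ∈ U) :
    ∃ b : (ℚ × ℚ) × ℚ, x ∈ qball b ∧ qball b ⊆ U ∧ qc b.1 ∈ qball b := by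
  obtain ⟨ε, hε, hball⟩ := Metric.isOpen_iff.1 hU x hx
  obtain ⟨q, hq⟩ := qc_dense x (show (0:ℝ) < ε/4 by linarith)
  obtain ⟨r, hr1, hr2⟩ := exists_rat_btwn (show (ε:ℝ)/4 < ε/2 by linarith)
  have hr0 : (0:ℝ) < r := lt_trans (by linarith) hr1
  refine ⟨(q, r), ?_, ?_, ?_⟩
  · simp only [qball, mem_ball]
    calc dist x (qc q) = dist (qc q) x := dist_comm _ _
      _ < ε/4 := hq
      _ < r := hr1
  · intro w hw
    apply hball
    simp only [qball, mem_ball] at hw ⊢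
    calc dist w x ≤ dist w (qc q) + dist (qc q) x := dist_triangle _ _ _
      _ < r + ε/4 := by linarith
      _ ≤ ε := by linarith
  · simpa [qball, mem_ball] using hr0

lemma rank_lt : (1 : Cardinal) < Module.rank ℝ ℂ := by
  rw [Complex.rank_real_complex]; norm_num

lemma isPreconnected_ext {n : ℝ} (hn : 0 ≤ n) : IsPreconnected {z : ℂ | n < ‖z‖} := by
  apply isPreconnected_of_forall (((n + 1 : ℝ) : ℂ))
  intro y hy
  have hy' : n < ‖y‖ := hy
  have hy0 : 0 < ‖y‖ := lt_of_le_of_lt hn hy'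
  set c : ℝ := (n + 1) / ‖y‖ with hc
  have hc0 : 0 < c := by positivity
  have hcy : c * ‖y‖ = n + 1 := div_mul_cancel₀ _ (ne_of_gt hy0)
  refine ⟨sphere (0:ℂ) (n+1) ∪ (fun t : ℝ => t • y) '' uIcc c 1, ?_, ?_, ?_, ?_⟩
  · rintro z (hz | ⟨t, ht, rfl⟩)
    · have : ‖z‖ = n + 1 := by simpa using hz
      simp only [mem_setOf_eq, this]; linarith
    · have htmin : min c 1 ≤ t := (Set.mem_uIcc.mp ht).elim (fun h => le_trans (min_le_left _ _) h.1)
        (fun h => le_trans (min_le_right _ _) h.1)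
      have ht0 : 0 < t := lt_of_lt_of_le (lt_min hc0 one_pos) htmin
      have : ‖t • y‖ = t * ‖y‖ := by
        rw [norm_smul, Real.norm_eq_abs, abs_of_pos ht0]
      rw [mem_setOf_eq, this]
      have : min c 1 * ‖y‖ ≤ t * ‖y‖ := mul_le_mul_of_nonneg_right htmin (le_of_lt hy0)
      have hmin : min (c * ‖y‖) (1 * ‖y‖) ≤ t * ‖y‖ := by
        rwa [min_mul_of_nonneg _ _ (le_of_lt hy0)] at this
      rw [hcy, one_mul] at hmin
      have : min (n+1) ‖y‖ > n := lt_min (by linarith) hy'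
      linarith
  · left
    simp only [mem_sphere_iff_norm, sub_zero]
    rw [show ((n + 1 : ℝ) : ℂ) = (((n + 1 : ℝ)) : ℂ) from rfl, Complex.norm_real, Real.norm_eq_abs,
      abs_of_pos (by linarith : (0:ℝ) < n + 1)]
  · right; exact ⟨1, Set.right_mem_uIcc, one_smul _ _⟩
  · apply IsPreconnected.union (c • y)
    · rw [mem_sphere_iff_norm, sub_zero, norm_smul, Real.norm_eq_abs, abs_of_pos hc0, hcy]
    · exact ⟨c, Set.left_mem_uIcc, rfl⟩
    · exact (isPreconnected_sphere rank_lt _ _)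
    · exact (isPreconnected_uIcc).image _ ((continuous_id.smul continuous_const).continuousOn)

lemma ext_unbounded (n : ℝ) : ¬ Bornology.IsBounded {z : ℂ | n < ‖z‖} := by
  intro h
  obtain ⟨C, hC⟩ := isBounded_iff_forall_norm_le.mp h
  set R : ℝ := max n C + 1 with hR
  have h1 : n < ‖(R : ℂ)‖ := by
    rw [Complex.norm_real, Real.norm_eq_abs]
    calc n ≤ max n C := le_max_left _ _
      _ < R := by linarith
      _ ≤ |R| := le_abs_self _
  have := hC _ h1
  rw [Complex.norm_real, Real.norm_eq_abs] at this
  have : R ≤ C := le_trans (le_abs_self _) this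
  have : C ≤ max n C := le_max_right _ _
  linarith [hR ▸ le_refl R]

lemma finite_setComponents {S : Set ℂ} {P : Set (Set ℂ)} (hPfin : P.Finite)
    (hPc : ∀ p ∈ P, IsPreconnected p) (hS : S = ⋃₀ P) : (setComponents S).Finite := by
  have hsub : setComponents S ⊆ ⋃ p ∈ P, {C | ∃ x ∈ p, C = connectedComponentIn S x} := by
    rintro C ⟨x, hxS, rfl⟩
    rw [hS] at hxS
    obtain ⟨p, hp, hxp⟩ := hxS
    exact mem_biUnion hp ⟨x, hxp, rfl⟩
  refine Set.Finite.subset (hPfin.biUnion fun p hp => ?_) hsub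
  apply Set.Subsingleton.finite
  rintro C ⟨x, hxp, rfl⟩ D ⟨y, hyp, rfl⟩
  have hsub' : p ⊆ connectedComponentIn S x :=
    (hPc p hp).subset_connectedComponentIn hxp (hS ▸ subset_sUnion_of_mem hp)
  exact connectedComponentIn_eq (hsub' hyp)

def cand (Ω : Set ℂ) (n : ℕ) (F : List ((ℚ × ℚ) × ℚ)) : Set ℂ :=
  (Ωᶜ ∩ closedBall 0 n) \ ⋃ b ∈ F, qball b

lemma cand_compl (Ω : Set ℂ) (n : ℕ) (F : List ((ℚ × ℚ) × ℚ)) :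
    (cand Ω n F)ᶜ = Ω ∪ {z : ℂ | (n:ℝ) < ‖z‖} ∪ ⋃ b ∈ F, qball b := by
  ext z
  simp only [cand, mem_compl_iff, mem_diff, mem_inter_iff, mem_closedBall, dist_zero_right,
    mem_union, mem_setOf_eq, not_and, not_not, not_le]
  by_cases hz : z ∈ Ω <;> by_cases hb : z ∈ ⋃ b ∈ F, qball b <;> simp [hz, hb] <;> tauto

lemma cand_compact {Ω : Set ℂ} (hΩo : IsOpen Ω) (n : ℕ) (F : List ((ℚ × ℚ) × ℚ)) :
    IsCompact (cand Ω n F) :=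
  ((isCompact_closedBall _ _).inter_left hΩo.isClosed_compl).diff
    (isOpen_biUnion fun _ _ => isOpen_ball)

lemma cand_subset (Ω : Set ℂ) (n : ℕ) (F : List ((ℚ × ℚ) × ℚ)) : cand Ω n F ⊆ Ωᶜ :=
  fun _ hx => hx.1.1

lemma cand_components_finite {Ω : Set ℂ} (hΩconn : IsPreconnected Ω) (n : ℕ)
    (F : List ((ℚ × ℚ) × ℚ)) : (setComponents (cand Ω n F)ᶜ).Finite := by
  apply finite_setComponents
    (P := insert Ω (insert {z : ℂ | (n:ℝ) < ‖z‖} (qball '' {b | b ∈ F})))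
  · exact (((F.finite_toSet).image qball).insert _).insert _
  · rintro p hp
    rcases hp with rfl | rfl | ⟨b, _, rfl⟩
    · exact hΩconn
    · exact isPreconnected_ext (Nat.cast_nonneg n)
    · exact (convex_ball _ _).isPreconnected
  · rw [cand_compl]
    rw [Set.sUnion_insert, Set.sUnion_insert, Set.sUnion_image, Set.union_assoc]
    rfl

end L59

namespace L59
open Metric Set unitInterval

lemma exists_chain {U : Set ℂ} (hU : IsOpen U) (hUconn : IsPreconnected U) {p : ℂ}
    (h0 : (0:ℂ) ∈ U) (hp : p ∈ U) :
    ∃ L : List ((ℚ × ℚ) × ℚ), (∀ b ∈ L, qball b ⊆ U) ∧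
      ∃ W : Set ℂ, IsPreconnected W ∧ (0:ℂ) ∈ W ∧ p ∈ W ∧ W ⊆ ⋃ b ∈ L, qball b := by
  have hUc : IsConnected U := ⟨⟨0, h0⟩, hUconn⟩
  have hpath : IsPathConnected U := (hU.isConnected_iff_isPathConnected).mp hUc
  obtain ⟨γ, hγ⟩ := hpath.joinedIn 0 h0 p hp
  have hrange : range ⇑γ ⊆ U := range_subset_iff.mpr hγ
  have hcompact : IsCompact (range ⇑γ) := isCompact_range γ.continuous
  obtain ⟨δ, hδ0, hδ⟩ := hcompact.exists_thickening_subset_open hU hrange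
  have hucont : UniformContinuous ⇑γ := CompactSpace.uniformContinuous_of_continuous γ.continuous
  rw [Metric.uniformContinuous_iff] at hucont
  obtain ⟨η, hη0, hη⟩ := hucont (δ/8) (by linarith)
  obtain ⟨k', hk'⟩ := exists_nat_one_div_lt hη0
  set k : ℕ := k' + 1 with hk
  have hkpos : (0:ℝ) < k := by positivity
  set z : ℕ → ℂ := fun j => γ.extend (j / k) with hz
  have hzmem : ∀ j, z j ∈ range ⇑γ := fun j => ⟨_, rfl⟩
  have hzdist : ∀ j, dist (z j) (z (j+1)) < δ/8 := by
    intro j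
    apply hη
    have h1 : dist (projIcc (0:ℝ) 1 zero_le_one ((j:ℝ)/k)) (projIcc (0:ℝ) 1 zero_le_one ((j+1:ℕ)/k))
        ≤ dist ((j:ℝ)/k) (((j+1:ℕ):ℝ)/k) := by
      simpa using (LipschitzWith.projIcc (zero_le_one)).dist_le_mul ((j:ℝ)/k) (((j+1:ℕ):ℝ)/k)
    calc dist (projIcc (0:ℝ) 1 zero_le_one ((j:ℝ)/k)) (projIcc (0:ℝ) 1 zero_le_one ((j+1:ℕ)/k))
        ≤ dist ((j:ℝ)/k) (((j+1:ℕ):ℝ)/k) := h1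
      _ < η := by
          rw [Real.dist_eq, div_sub_div_same, abs_div, abs_of_pos hkpos]
          push_cast
          rw [show (j:ℝ) - (j+1) = -1 by ring, abs_neg, abs_one]
          push_cast
          simpa [hk] using hk'
  have hQex : ∀ j, ∃ q : ℚ × ℚ, dist (qc q) (z j) < δ/8 := fun j => qc_dense _ (by linarith)
  choose Q hQ using hQex
  obtain ⟨r, hr1, hr2⟩ := exists_rat_btwn (show δ/2 < 3*δ/4 by linarith)
  have hr0 : (0:ℝ) < r := by linarith
  set B : ℕ → Set ℂ := fun i => qball (Q (min i k), r) with hB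
  have hBU : ∀ i, B i ⊆ U := by
    intro i w hw
    apply hδ
    rw [mem_thickening_iff]
    refine ⟨z (min i k), hzmem _, ?_⟩
    have hw' : dist w (qc (Q (min i k))) < r := hw
    calc dist w (z (min i k)) ≤ dist w (qc (Q (min i k))) + dist (qc (Q (min i k))) (z (min i k)) :=
          dist_triangle _ _ _
      _ < r + δ/8 := by have := hQ (min i k); linarith
      _ < δ := by linarith
  have hchain : ∀ i, (B i ∩ B (i+1)).Nonempty := by
    intro i
    refine ⟨qc (Q (min i k)), ?_, ?_⟩
    · show dist (qc (Q (min i k))) (qc (Q (min i k))) < (r:ℝ)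
      simpa using hr0
    · show dist (qc (Q (min i k))) (qc (Q (min (i+1) k))) < (r:ℝ)
      rcases le_or_gt k i with hik | hik
      · rw [min_eq_right hik, min_eq_right (by omega)]
        simpa using hr0
      · rw [min_eq_left (by omega), min_eq_left (by omega)]
        calc dist (qc (Q i)) (qc (Q (i+1)))
            ≤ dist (qc (Q i)) (z i) + dist (z i) (z (i+1)) + dist (z (i+1)) (qc (Q (i+1))) :=
              dist_triangle4 _ _ _ _
          _ < δ/8 + δ/8 + δ/8 := by
              have := hQ i; have := hQ (i+1); have := hzdist i
              rw [dist_comm (z (i+1))]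
              linarith
          _ < r := by linarith
  have h0B : (0:ℂ) ∈ B 0 := by
    show dist (0:ℂ) (qc (Q (min 0 k))) < (r:ℝ)
    have hz0 : z 0 = 0 := by
      simp only [hz, Nat.cast_zero, zero_div]
      rw [γ.extend_zero]
    rw [min_eq_left (Nat.zero_le k), dist_comm]
    have := hQ 0
    rw [hz0] at this
    linarith
  have hpB : p ∈ B k := by
    show dist p (qc (Q (min k k))) < (r:ℝ)
    have hzk : z k = p := by
      simp only [hz]
      rw [div_self (ne_of_gt hkpos), γ.extend_one]
    rw [min_self, dist_comm]
    have := hQ k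
    rw [hzk] at this
    linarith
  refine ⟨List.ofFn (fun i : Fin (k+1) => (Q i.val, r)), ?_, ⋃ i, B i, ?_, ?_, ?_, ?_⟩
  · intro b hb
    rw [List.mem_ofFn] at hb
    obtain ⟨i, rfl⟩ := hb
    have : qball (Q i.val, r) = B i.val := by
      show qball (Q i.val, r) = qball (Q (i.val ⊓ k), r)
      rw [min_eq_left (Nat.le_of_lt_succ i.isLt)]
    exact this ▸ hBU i.val
  · apply IsPreconnected.iUnion_of_chain
    · exact fun i => (convex_ball _ _).isPreconnected
    · intro i
      simpa [Order.succ_eq_add_one] using hchain i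
  · exact mem_iUnion.mpr ⟨0, h0B⟩
  · exact mem_iUnion.mpr ⟨k, hpB⟩
  · intro w hw
    obtain ⟨i, hi⟩ := mem_iUnion.mp hw
    refine mem_iUnion₂.mpr ⟨(Q (min i k), r), ?_, hi⟩
    rw [List.mem_ofFn]
    exact ⟨⟨min i k, Nat.lt_succ_of_le (min_le_right i k)⟩, rfl⟩

end L59


open L59

theorem lemma_5_9 (Ω : Set ℂ) (hΩo : IsOpen Ω) (hΩconn : IsConnected Ω)
    (hsc : SimplyConnectedSpace Ω) (h0 : (0:ℂ) ∈ Ω) :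
    ∃ Kt : ℕ → Set ℂ,
      (∀ m, IsCompact (Kt m) ∧ Kt m ⊆ Ωᶜ ∧
        (setComponents (Kt m)ᶜ).Finite ∧
        (0:ℂ) ∈ (Kt m)ᶜ ∧ ¬ Bornology.IsBounded (connectedComponentIn (Kt m)ᶜ 0)) ∧
      ∀ K : Set ℂ, IsCompact K → K ⊆ Ωᶜ →
        (setComponents Kᶜ).Finite →
        (0:ℂ) ∈ Kᶜ → ¬ Bornology.IsBounded (connectedComponentIn Kᶜ 0) →
        ∃ m, K ⊆ Kt m ∧
          ∀ x ∈ Kᶜ, ∃ y ∈ (Kt m)ᶜ,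
            connectedComponentIn (Kt m)ᶜ y ⊆ connectedComponentIn Kᶜ x := by
  classical
  set e := Denumerable.eqv (ℕ × List ((ℚ × ℚ) × ℚ)) with he
  set KtF : ℕ → Set ℂ := fun m =>
    if ¬ Bornology.IsBounded (connectedComponentIn (cand Ω (e.symm m).1 (e.symm m).2)ᶜ 0)
    then cand Ω (e.symm m).1 (e.symm m).2 else ∅ with hKtF
  refine ⟨KtF, ?_, ?_⟩
  · intro m
    by_cases hgood : ¬ Bornology.IsBounded
        (connectedComponentIn (cand Ω (e.symm m).1 (e.symm m).2)ᶜ 0)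
    · have hKtm : KtF m = cand Ω (e.symm m).1 (e.symm m).2 := by
        rw [hKtF]; exact if_pos hgood
      rw [hKtm]
      exact ⟨cand_compact hΩo _ _, cand_subset Ω _ _,
        cand_components_finite hΩconn.isPreconnected _ _,
        fun hx => (cand_subset Ω _ _ hx) h0, hgood⟩
    · have hKtm : KtF m = ∅ := by rw [hKtF]; exact if_neg hgood
      rw [hKtm]
      refine ⟨isCompact_empty, empty_subset _, ?_, by simp, ?_⟩
      · rw [compl_empty]
        apply finite_setComponents (P := {univ}) (finite_singleton _)
        · rintro p hp
          rw [mem_singleton_iff] at hp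
          rw [hp]
          exact isPreconnected_univ
        · rw [sUnion_singleton]
      · rw [compl_empty, connectedComponentIn_univ, PreconnectedSpace.connectedComponent_eq_univ]
        exact fun h => ext_unbounded 0 (h.subset (subset_univ _))
  · intro K hK hKΩ hKfin h0K hKunb
    obtain ⟨ρ, hρ⟩ := hK.isBounded.subset_closedBall 0
    set n : ℕ := ⌈ρ⌉₊ with hn
    have hKball : K ⊆ closedBall 0 n := hρ.trans (closedBall_subset_closedBall (Nat.le_ceil ρ))
    have hKopen : IsOpen Kᶜ := hK.isClosed.isOpen_compl
    set U := connectedComponentIn Kᶜ 0 with hU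
    have hUopen : IsOpen U := hKopen.connectedComponentIn
    have hUsub : U ⊆ Kᶜ := connectedComponentIn_subset _ _
    have h0U : (0:ℂ) ∈ U := mem_connectedComponentIn h0K
    have hUconn : IsPreconnected U := isPreconnected_connectedComponentIn
    have hp : ∃ p ∈ U, (n:ℝ) < ‖p‖ := by
      by_contra hcon
      push_neg at hcon
      exact hKunb (isBounded_iff_forall_norm_le.mpr ⟨n, hcon⟩)
    obtain ⟨p, hpU, hpn⟩ := hp
    have hp0 : (0:ℝ) < ‖p‖ := lt_of_le_of_lt (Nat.cast_nonneg n) hpn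
    obtain ⟨Lc, hLcU, W, hWconn, h0W, hpW, hWsub⟩ := exists_chain hUopen hUconn h0U hpU
    have hole : ∀ C ∈ setComponents Kᶜ, ∃ b, qball b ⊆ C ∧ qc b.1 ∈ qball b := by
      rintro C ⟨x, hxK, rfl⟩
      have hopen : IsOpen (connectedComponentIn Kᶜ x) := hKopen.connectedComponentIn
      obtain ⟨b, _, hb2, hb3⟩ := exists_qball hopen (mem_connectedComponentIn hxK)
      exact ⟨b, hb2, hb3⟩
    set g : Set ℂ → (ℚ × ℚ) × ℚ := fun C =>
      if h : C ∈ setComponents Kᶜ then (hole C h).choose else default with hg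
    have hgspec : ∀ C (h : C ∈ setComponents Kᶜ),
        qball (g C) ⊆ C ∧ qc (g C).1 ∈ qball (g C) := by
      intro C h
      rw [hg]
      simp only [dif_pos h]
      exact (hole C h).choose_spec
    set F : List ((ℚ × ℚ) × ℚ) := Lc ++ hKfin.toFinset.toList.map g with hF
    set m := e (n, F) with hm
    have hesymm : e.symm m = (n, F) := Equiv.symm_apply_apply _ _
    have hKsub : K ⊆ cand Ω n F := by
      intro x hx
      refine ⟨⟨hKΩ hx, hKball hx⟩, ?_⟩
      intro hxU
      obtain ⟨b, hbF, hxb⟩ := mem_iUnion₂.mp hxU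
      rcases List.mem_append.mp hbF with hbc | hbh
      · exact (hUsub (hLcU b hbc hxb)) hx
      · obtain ⟨C, hCmem, rfl⟩ := List.mem_map.mp hbh
        have hC : C ∈ setComponents Kᶜ :=
          (Set.Finite.mem_toFinset _).mp (Finset.mem_toList.mp hCmem)
        have hxC := (hgspec C hC).1 hxb
        obtain ⟨x', hx', rfl⟩ := hC
        exact (connectedComponentIn_subset _ _ hxC) hx
    have hcandK : (cand Ω n F)ᶜ ⊆ Kᶜ := compl_subset_compl.mpr hKsub
    -- the connecting set
    set R : Set ℂ := (fun c : ℝ => c • p) '' Ici 1 with hR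
    have hRsub : R ⊆ {z : ℂ | (n:ℝ) < ‖z‖} := by
      rintro _ ⟨c, hc, rfl⟩
      have hc1 : (1:ℝ) ≤ c := hc
      rw [mem_setOf_eq, norm_smul, Real.norm_eq_abs, abs_of_pos (by linarith)]
      calc (n:ℝ) < ‖p‖ := hpn
        _ = 1 * ‖p‖ := (one_mul _).symm
        _ ≤ c * ‖p‖ := mul_le_mul_of_nonneg_right hc1 (le_of_lt hp0)
    have hVsub : (Ω ∪ W) ∪ R ⊆ (cand Ω n F)ᶜ := by
      rw [cand_compl]
      rintro w ((hw | hw) | hw)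
      · exact Or.inl (Or.inl hw)
      · refine Or.inr ?_
        refine mem_iUnion₂.mp (hWsub hw) |>.elim fun b hb => ?_
        exact mem_iUnion₂.mpr ⟨b, List.mem_append.mpr (Or.inl hb.1), hb.2⟩
      · exact Or.inl (Or.inr (hRsub hw))
    have hVconn : IsPreconnected ((Ω ∪ W) ∪ R) := by
      apply IsPreconnected.union p
      · exact Or.inr hpW
      · exact ⟨1, self_mem_Ici, one_smul ℝ p⟩
      · exact IsPreconnected.union 0 h0 h0W hΩconn.isPreconnected hWconn
      · exact isPreconnected_Ici.image _ ((continuous_id.smul continuous_const).continuousOn)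
    have hVcomp : (Ω ∪ W) ∪ R ⊆ connectedComponentIn (cand Ω n F)ᶜ 0 :=
      hVconn.subset_connectedComponentIn (Or.inl (Or.inl h0)) hVsub
    have hRunb : ¬ Bornology.IsBounded R := by
      intro h
      obtain ⟨C, hC⟩ := isBounded_iff_forall_norm_le.mp h
      set c : ℝ := max 1 ((C + 1) / ‖p‖) with hc
      have hcR : c • p ∈ R := ⟨c, mem_Ici.mpr (le_max_left _ _), rfl⟩
      have := hC _ hcR
      rw [norm_smul, Real.norm_eq_abs, abs_of_pos (lt_of_lt_of_le one_pos (le_max_left _ _))] at this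
      have h2 : (C + 1) / ‖p‖ * ‖p‖ ≤ c * ‖p‖ :=
        mul_le_mul_of_nonneg_right (le_max_right _ _) (le_of_lt hp0)
      rw [div_mul_cancel₀ _ (ne_of_gt hp0)] at h2
      linarith
    have hgood : ¬ Bornology.IsBounded (connectedComponentIn (cand Ω n F)ᶜ 0) := by
      intro h
      exact hRunb (h.subset ((subset_union_right).trans hVcomp))
    have hKtm : KtF m = cand Ω n F := by
      rw [hKtF]
      simp only [hesymm]
      exact if_pos hgood
    refine ⟨m, ?_, ?_⟩
    · rw [hKtm]; exact hKsub
    · intro x hxK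
      have hC : connectedComponentIn Kᶜ x ∈ setComponents Kᶜ := ⟨x, hxK, rfl⟩
      obtain ⟨hb1, hb2⟩ := hgspec _ hC
      set b := g (connectedComponentIn Kᶜ x) with hb
      have hbF : b ∈ F := by
        rw [hF]
        refine List.mem_append.mpr (Or.inr ?_)
        exact List.mem_map.mpr ⟨_, Finset.mem_toList.mpr ((Set.Finite.mem_toFinset _).mpr hC), rfl⟩
      have hqsub : qball b ⊆ (cand Ω n F)ᶜ := by
        rw [cand_compl]
        exact fun w hw => Or.inr (mem_iUnion₂.mpr ⟨b, hbF, hw⟩)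
      refine ⟨qc b.1, ?_, ?_⟩
      · rw [hKtm]; exact hqsub hb2
      · rw [hKtm]
        have h1 : connectedComponentIn (cand Ω n F)ᶜ (qc b.1) ⊆ connectedComponentIn Kᶜ (qc b.1) :=
          connectedComponentIn_mono _ hcandK
        have h2 : connectedComponentIn Kᶜ (qc b.1) = connectedComponentIn Kᶜ x :=
          (connectedComponentIn_eq (hb1 hb2)).symm
        rw [h2] at h1
        exact h1
end
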